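/- arXiv:2211.01881 — 3 statements merged into one kernel-verified Lean document; each statement's English description precedes it below -/
import Mathlib

section
/- A connected signed graph (G,σ) is flow-admissible if and only if it is not equivalent (under switchings) to a signed graph with exactly one negative edge and it has no bridge b such that (G−b, σ restricted to G−b) has a balanced component. -/
/-- A signed graph: a multigraph (loops and multiple edges allowed) with vertex type `V`
and edge type `E`, where edge `e` joins `fst e` and `snd e`, together with a signature
`sign : E → ℤ` taking values in `{1, -1}`. -/
structure SignedGraph (V E : Type) where
  fst : E → V
  snd : E → V
  sign : E → ℤ
  sign_unit : ∀ e, sign e = 1 ∨ sign e = -1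

namespace SignedGraph

variable {V E : Type}

/-- A circuit in a signed graph: pairwise distinct vertices `vert 0, …, vert (n-1)` and
pairwise distinct edges `edge 0, …, edge (n-1)` with `edge i` joining `vert i` and
`vert ((i+1) % n)`.  (`n = 1` gives a loop, `n = 2` a digon.) -/
structure Circuit (G : SignedGraph V E) where
  n : ℕ
  n_pos : 0 < n
  vert : ℕ → V
  edge : ℕ → E
  vert_inj : ∀ i < n, ∀ j < n, vert i = vert j → i = j
  edge_inj : ∀ i < n, ∀ j < n, edge i = edge j → i = j
  ends : ∀ i < n,
    (G.fst (edge i) = vert i ∧ G.snd (edge i) = vert ((i + 1) % n)) ∨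
    (G.snd (edge i) = vert i ∧ G.fst (edge i) = vert ((i + 1) % n))

namespace Circuit

variable {G : SignedGraph V E}

/-- Edge set of a circuit. -/
def edgeSet (c : Circuit G) : Set E := {e | ∃ i < c.n, c.edge i = e}

/-- Vertex set of a circuit. -/
def vertSet (c : Circuit G) : Set V := {v | ∃ i < c.n, c.vert i = v}

/-- The number of negative edges of a circuit. -/
noncomputable def negCount (c : Circuit G) : ℕ :=
  {i | i < c.n ∧ G.sign (c.edge i) = -1}.ncard

/-- A circuit is balanced if it contains an even number of negative edges. -/
def IsBalanced (c : Circuit G) : Prop := Even c.negCount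

end Circuit

variable (G : SignedGraph V E)

/-- The endpoint of a half edge `(e, b)`: each edge `e` is regarded as the two half
edges `(e, true)` (at `fst e`) and `(e, false)` (at `snd e`). -/
def ep (h : E × Bool) : V := if h.2 then G.fst h.1 else G.snd h.1

/-- An orientation assigns `±1` to each half edge so that the two half edges of an
edge `e` multiply to `- sign e`. -/
def IsOrientation (τ : E × Bool → ℤ) : Prop :=
  (∀ h, τ h = 1 ∨ τ h = -1) ∧ ∀ e : E, τ (e, true) * τ (e, false) = - G.sign e

/-- The boundary of `(τ, f)` at a vertex `v`: the sum of `τ h * f e` over all half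
edges `h` of edges `e` incident with `v`. -/
noncomputable def boundary (τ : E × Bool → ℤ) (f : E → ℤ) (v : V) : ℤ :=
  ∑ᶠ h ∈ {h : E × Bool | G.ep h = v}, τ h * f h.1

/-- `(τ, f)` is a `k`-flow: `τ` is an orientation, `|f e| ≤ k - 1` everywhere, and the
boundary vanishes at every vertex. -/
def IsFlow (k : ℤ) (τ : E × Bool → ℤ) (f : E → ℤ) : Prop :=
  G.IsOrientation τ ∧ (∀ e, |f e| ≤ k - 1) ∧ ∀ v, G.boundary τ f v = 0

/-- `(τ, f)` is a `ℤ_k`-flow: `τ` is an orientation, `|f e| ≤ k - 1` everywhere, and the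
boundary is divisible by `k` at every vertex. -/
def IsZFlow (k : ℤ) (τ : E × Bool → ℤ) (f : E → ℤ) : Prop :=
  G.IsOrientation τ ∧ (∀ e, |f e| ≤ k - 1) ∧ ∀ v, k ∣ G.boundary τ f v

/-- `f` is nowhere-zero. -/
def NowhereZero (_G : SignedGraph V E) (f : E → ℤ) : Prop := ∀ e, f e ≠ 0

/-- `G` admits a nowhere-zero `k`-flow. -/
def HasNZFlow (k : ℤ) : Prop := ∃ τ f, G.IsFlow k τ f ∧ G.NowhereZero f

/-- `G` is flow-admissible: it admits a nowhere-zero `k`-flow for some integer `k ≥ 2`. -/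
def FlowAdmissible : Prop := ∃ k : ℤ, 2 ≤ k ∧ G.HasNZFlow k

/-- The support of `f`. -/
def supp (_G : SignedGraph V E) (f : E → ℤ) : Set E := {e | f e ≠ 0}

/-- The degree of a vertex: the number of half edges incident with it (a loop counts
twice). -/
noncomputable def degree (v : V) : ℕ := {h : E × Bool | G.ep h = v}.ncard

/-- The degree of `v` in the subgraph with edge set `A`. -/
noncomputable def degIn (A : Set E) (v : V) : ℕ :=
  {h : E × Bool | h.1 ∈ A ∧ G.ep h = v}.ncard

/-- `G` is cubic: every vertex has degree 3. -/
def Cubic : Prop := ∀ v, G.degree v = 3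

/-- Adjacency via an edge belonging to `A`. -/
def adjIn (A : Set E) (u v : V) : Prop :=
  ∃ e ∈ A, (G.fst e = u ∧ G.snd e = v) ∨ (G.fst e = v ∧ G.snd e = u)

/-- Reachability inside the subgraph with edge set `A`. -/
def reachIn (A : Set E) : V → V → Prop := Relation.ReflTransGen (G.adjIn A)

/-- `G` is connected. -/
def Connected : Prop := ∀ u v, G.reachIn Set.univ u v

/-- `e` is a bridge (cut edge) of the underlying graph. -/
def IsBridge (e : E) : Prop := ¬ G.reachIn {e' | e' ≠ e} (G.fst e) (G.snd e)

/-- `G` is bridgeless. -/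
def Bridgeless : Prop := ∀ e, ¬ G.IsBridge e

/-- The edge set `A` contains no circuit. -/
def Acyclic (A : Set E) : Prop := ∀ c : Circuit G, ¬ c.edgeSet ⊆ A

/-- Every circuit with all edges in `A` is balanced. -/
def BalancedOn (A : Set E) : Prop := ∀ c : Circuit G, c.edgeSet ⊆ A → c.IsBalanced

/-- `G` is balanced: it contains no unbalanced circuit. -/
def Balanced : Prop := ∀ c : Circuit G, c.IsBalanced

/-- The number of negative edges in `A`. -/
noncomputable def negEdgeCount (A : Set E) : ℕ := {e ∈ A | G.sign e = -1}.ncard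

/-- The edges of the connected component of `v` in the subgraph with edge set `A`. -/
def compEdges (A : Set E) (v : V) : Set E := {e ∈ A | G.reachIn A v (G.fst e)}

/-- The number of (nonempty) components of the subgraph with edge set `A` containing an
odd number of negative edges. -/
noncomputable def oddCompCount (A : Set E) : ℕ :=
  {S : Set E | (∃ v, S = G.compEdges A v) ∧ S.Nonempty ∧ Odd (G.negEdgeCount S)}.ncard

/-- The number of unbalanced circuits (counted by their edge sets) all of whose edges
lie in `A`. -/
noncomputable def unbalCircCount (A : Set E) : ℕ :=
  {S : Set E | ∃ c : Circuit G, c.edgeSet = S ∧ S ⊆ A ∧ ¬ c.IsBalanced}.ncard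

/-- Vertices incident with an edge of `A`. -/
def vertsIn (A : Set E) : Set V := {v | ∃ e ∈ A, G.fst e = v ∨ G.snd e = v}

/-- A proper 3-edge-coloring: edges sharing an endvertex receive different colors. -/
def IsProper3EdgeColoring (col : E → Fin 3) : Prop :=
  ∀ e e', e ≠ e' →
    (G.fst e = G.fst e' ∨ G.fst e = G.snd e' ∨ G.snd e = G.fst e' ∨ G.snd e = G.snd e') →
    col e ≠ col e'

/-- `G` is 3-edge-colorable. -/
def ThreeEdgeColorable : Prop := ∃ col : E → Fin 3, G.IsProper3EdgeColoring col

/-- `G` is hamiltonian: it contains a circuit through all vertices. -/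
def Hamiltonian : Prop := ∃ c : Circuit G, ∀ v : V, v ∈ c.vertSet

end SignedGraph

namespace SignedGraph

/-- `σ'` is obtained from the signature of `G` by a sequence of switchings, i.e. there
is a `±1`-valued function `ε` on the vertices with
`σ' e = ε (fst e) * ε (snd e) * sign e` for every edge. -/
def SwitchEquiv {V E : Type} (G : SignedGraph V E) (σ' : E → ℤ) : Prop :=
  ∃ ε : V → ℤ, (∀ v, ε v = 1 ∨ ε v = -1) ∧
    ∀ e, σ' e = ε (G.fst e) * ε (G.snd e) * G.sign e

/-- `G − b` has a balanced component: there is a vertex `v` such that every circuit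
avoiding `b` lying in the component of `v` of `G − b` is balanced. -/
def HasBalancedComponentWithout {V E : Type} (G : SignedGraph V E) (b : E) : Prop :=
  ∃ v : V, ∀ c : Circuit G, c.edgeSet ⊆ {e | e ≠ b} →
    G.reachIn {e | e ≠ b} v (c.vert 0) → c.IsBalanced

end SignedGraph

namespace SignedGraph

open Finset
open scoped Classical

variable {V E : Type} [Fintype V] [Fintype E] (G : SignedGraph V E)

/-- The reference orientation. -/
def tau0 : E × Bool → ℤ := fun h => if h.2 then 1 else -G.sign h.1

variable {G}

lemma sign_sq (e : E) : G.sign e * G.sign e = 1 := by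
  rcases G.sign_unit e with h | h <;> rw [h] <;> norm_num

lemma tau0_orient : G.IsOrientation G.tau0 := by
  constructor
  · rintro ⟨e, b⟩
    rcases G.sign_unit e with h | h <;> cases b <;> simp [tau0, h]
  · intro e; simp [tau0]

lemma boundary_eq_sum (τ : E × Bool → ℤ) (f : E → ℤ) (v : V) :
    G.boundary τ f v = ∑ h ∈ univ.filter (fun h => G.ep h = v), τ h * f h.1 := by
  rw [boundary]
  rw [show {h : E × Bool | G.ep h = v} = ↑(univ.filter (fun h => G.ep h = v)) by
    ext h; simp]
  exact finsum_mem_coe_finset _ _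

/-- A flow with respect to the reference orientation, no bound. -/
def Flow0 (G : SignedGraph V E) (f : E → ℤ) : Prop := ∀ v, G.boundary G.tau0 f v = 0

lemma flowAdmissible_iff :
    G.FlowAdmissible ↔ ∃ f : E → ℤ, G.Flow0 f ∧ ∀ e, f e ≠ 0 := by
  constructor
  · rintro ⟨k, _, τ, f, ⟨⟨hτ1, hτ2⟩, _, hb⟩, hnz⟩
    refine ⟨fun e => τ (e, true) * f e, fun v => ?_, fun e => ?_⟩
    · rw [← hb v, boundary_eq_sum, boundary_eq_sum]
      apply Finset.sum_congr rfl
      rintro ⟨e, b⟩ _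
      cases b
      · have h2 : τ (e, false) = τ (e, true) * (τ (e, true) * τ (e, false)) := by
          rcases hτ1 (e, true) with h | h <;> rw [h] <;> ring
        rw [hτ2 e] at h2
        simp only [tau0, h2, Bool.false_eq_true, if_false]; ring
      · simp [tau0]
    · rcases hτ1 (e, true) with h | h <;> simp [h, hnz e]
  · rintro ⟨f, hf, hnz⟩
    refine ⟨2 + ∑ e, |f e|, ?_, G.tau0, f, ⟨tau0_orient, fun e => ?_, hf⟩, hnz⟩
    · have : (0:ℤ) ≤ ∑ e, |f e| := Finset.sum_nonneg fun e _ => abs_nonneg _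
      omega
    · have : |f e| ≤ ∑ e, |f e| :=
        Finset.single_le_sum (fun e _ => abs_nonneg (f e)) (mem_univ e)
      omega

/-- The key summation identity over ℤ. -/
lemma sum_weighted_boundary (W : V → ℤ) (f : E → ℤ) :
    ∑ v, W v * G.boundary G.tau0 f v
      = ∑ e, (W (G.fst e) - G.sign e * W (G.snd e)) * f e := by
  have h1 : ∀ v, W v * G.boundary G.tau0 f v
      = ∑ h ∈ univ.filter (fun h : E × Bool => G.ep h = v),
          W (G.ep h) * (G.tau0 h * f h.1) := by
    intro v
    rw [boundary_eq_sum, Finset.mul_sum]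
    apply Finset.sum_congr rfl
    intro h hh
    rw [mem_filter] at hh
    rw [hh.2]
  calc ∑ v, W v * G.boundary G.tau0 f v
      = ∑ v, ∑ h ∈ univ.filter (fun h : E × Bool => G.ep h = v),
          W (G.ep h) * (G.tau0 h * f h.1) := by
        exact Finset.sum_congr rfl fun v _ => h1 v
    _ = ∑ h : E × Bool, W (G.ep h) * (G.tau0 h * f h.1) := by
        exact Finset.sum_fiberwise _ _ _
    _ = ∑ e, (W (G.fst e) - G.sign e * W (G.snd e)) * f e := by
        rw [Fintype.sum_prod_type]
        apply Finset.sum_congr rfl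
        intro e _
        rw [Fintype.sum_bool]
        simp [tau0, ep]
        ring

end SignedGraph
section Walks

variable {V E : Type} [Fintype V] [Fintype E] {G : SignedGraph V E}

namespace SignedGraph

variable (G)

/-- Target of a step. -/
def stepDst (h : E × Bool) : V := G.ep (h.1, !h.2)

/-- Walks in the subgraph with edge set `A`. -/
def Walks (A : Set E) : V → List (E × Bool) → V → Prop
  | u, [], x => u = x
  | u, h :: t, x => h.1 ∈ A ∧ G.ep h = u ∧ Walks A (G.stepDst h) t x

/-- Sign of a walk. -/
def wsign (l : List (E × Bool)) : ℤ := (l.map fun h => G.sign h.1).prod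

/-- Vertex reached from `u` after traversing `l`. -/
def vertAt (u : V) (l : List (E × Bool)) : V := l.foldl (fun _ h => G.stepDst h) u

variable {G}

@[simp] lemma walks_nil {A : Set E} {u x : V} : G.Walks A u [] x ↔ u = x := Iff.rfl

@[simp] lemma walks_cons {A : Set E} {u x : V} {a : E × Bool} {t : List (E × Bool)} :
    G.Walks A u (a :: t) x ↔ a.1 ∈ A ∧ G.ep a = u ∧ G.Walks A (G.stepDst a) t x := Iff.rfl

@[simp] lemma wsign_nil : G.wsign ([] : List (E × Bool)) = 1 := rfl

@[simp] lemma wsign_cons (a : E × Bool) (l : List (E × Bool)) :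
    G.wsign (a :: l) = G.sign a.1 * G.wsign l := by simp [wsign]

lemma wsign_append (l1 l2 : List (E × Bool)) :
    G.wsign (l1 ++ l2) = G.wsign l1 * G.wsign l2 := by simp [wsign]

lemma wsign_unit (l : List (E × Bool)) : G.wsign l = 1 ∨ G.wsign l = -1 := by
  induction l with
  | nil => left; rfl
  | cons a t ih =>
      rcases G.sign_unit a.1 with h1 | h1 <;> rcases ih with h2 | h2 <;> simp [h1, h2]

@[simp] lemma vertAt_nil (u : V) : G.vertAt u [] = u := rfl

@[simp] lemma vertAt_cons (u : V) (a : E × Bool) (t : List (E × Bool)) :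
    G.vertAt u (a :: t) = G.vertAt (G.stepDst a) t := rfl

lemma vertAt_append (u : V) (l1 l2 : List (E × Bool)) :
    G.vertAt u (l1 ++ l2) = G.vertAt (G.vertAt u l1) l2 := by
  simp [vertAt, List.foldl_append]

lemma walks_append {A : Set E} {u w x : V} {l1 l2 : List (E × Bool)}
    (h1 : G.Walks A u l1 w) (h2 : G.Walks A w l2 x) : G.Walks A u (l1 ++ l2) x := by
  induction l1 generalizing u with
  | nil => obtain rfl := walks_nil.mp h1; exact h2
  | cons a t ih => exact ⟨h1.1, h1.2.1, ih h1.2.2⟩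

/-- Reversing a step. -/
def stepFlip (h : E × Bool) : E × Bool := (h.1, !h.2)

lemma walks_reverse {A : Set E} {u x : V} {l : List (E × Bool)} (hw : G.Walks A u l x) :
    G.Walks A x (l.reverse.map stepFlip) u := by
  induction l generalizing u with
  | nil => obtain rfl := walks_nil.mp hw; exact rfl
  | cons a t ih =>
      obtain ⟨ha, he, ht⟩ := hw
      have h3 : G.Walks A (G.stepDst a) [stepFlip a] u :=
        ⟨ha, rfl, by simp only [stepFlip, stepDst, Bool.not_not, Prod.mk.eta]; exact he⟩
      simpa using walks_append (ih ht) h3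

lemma wsign_reverse_flip (l : List (E × Bool)) :
    G.wsign (l.reverse.map stepFlip) = G.wsign l := by
  induction l with
  | nil => rfl
  | cons a t ih =>
      rw [List.reverse_cons, List.map_append, wsign_append, ih, wsign_cons]
      simp [wsign, stepFlip, mul_comm]

lemma reach_iff_walks {A : Set E} {u x : V} :
    G.reachIn A u x ↔ ∃ l, G.Walks A u l x := by
  constructor
  · intro h
    induction h with
    | refl => exact ⟨[], rfl⟩
    | tail hr ha ih =>
        obtain ⟨l, hl⟩ := ih
        obtain ⟨e, heA, hends⟩ := ha
        rcases hends with ⟨h1, h2⟩ | ⟨h1, h2⟩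
        · refine ⟨l ++ [(e, true)], walks_append hl (walks_cons.mpr ⟨heA, h1, walks_nil.mpr ?_⟩)⟩
          show G.ep (e, false) = _
          simpa [ep] using h2
        · refine ⟨l ++ [(e, false)], walks_append hl (walks_cons.mpr ⟨heA, h2, walks_nil.mpr ?_⟩)⟩
          show G.ep (e, true) = _
          simpa [ep] using h1
  · rintro ⟨l, hl⟩
    induction l generalizing u with
    | nil => obtain rfl := walks_nil.mp hl; exact .refl
    | cons a t ih =>
        obtain ⟨ha, he, ht⟩ := hl
        refine Relation.ReflTransGen.head ⟨a.1, ha, ?_⟩ (ih ht)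
        obtain ⟨e, b⟩ := a
        cases b
        · right
          exact ⟨rfl, by simpa [ep] using he⟩
        · left
          exact ⟨by simpa [ep] using he, rfl⟩

lemma reach_symm {A : Set E} {u x : V} (h : G.reachIn A u x) : G.reachIn A x u := by
  rw [reach_iff_walks] at h ⊢
  obtain ⟨l, hl⟩ := h
  exact ⟨_, walks_reverse hl⟩

lemma walks_take_drop {A : Set E} :
    ∀ (l : List (E × Bool)) (u x : V) (k : ℕ), G.Walks A u l x →
      G.Walks A u (l.take k) (G.vertAt u (l.take k)) ∧
        G.Walks A (G.vertAt u (l.take k)) (l.drop k) x := by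
  intro l
  induction l with
  | nil => intro u x k hw; simpa using hw
  | cons a t ih =>
      intro u x k hw
      obtain ⟨ha, he, ht⟩ := hw
      cases k with
      | zero => exact ⟨rfl, ⟨ha, he, ht⟩⟩
      | succ k =>
          obtain ⟨w1, w2⟩ := ih (G.stepDst a) x k ht
          exact ⟨⟨ha, he, w1⟩, w2⟩

lemma wsign_eq_prod (l : List (E × Bool)) (d : E × Bool) :
    G.wsign l = ∏ i ∈ Finset.range l.length, G.sign (l.getD i d).1 := by
  induction l with
  | nil => rfl
  | cons a t ih =>
      rw [wsign_cons, ih, List.length_cons, Finset.prod_range_succ']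
      simp [mul_comm]

end SignedGraph

end Walks
section Key

open Finset
open scoped Classical

variable {V E : Type} [Fintype V] [Fintype E] {G : SignedGraph V E}

namespace SignedGraph

lemma ep_of_true {h : E × Bool} (hb : h.2 = true) : G.ep h = G.fst h.1 := by
  simp [ep, hb]

lemma ep_of_false {h : E × Bool} (hb : h.2 = false) : G.ep h = G.snd h.1 := by
  simp [ep, hb]

lemma stepDst_of_true {h : E × Bool} (hb : h.2 = true) : G.stepDst h = G.snd h.1 := by
  simp [stepDst, ep, hb]

lemma stepDst_of_false {h : E × Bool} (hb : h.2 = false) : G.stepDst h = G.fst h.1 := by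
  simp [stepDst, ep, hb]

lemma neg_one_pow_card_of_prod {s : Finset ℕ} {f : ℕ → ℤ}
    (hf : ∀ i ∈ s, f i = 1 ∨ f i = -1) :
    ∏ i ∈ s, f i = (-1) ^ (s.filter (fun i => f i = -1)).card := by
  rw [← Finset.prod_filter_mul_prod_filter_not s (fun i => f i = -1) f]
  rw [Finset.prod_congr rfl (fun i hi => (Finset.mem_filter.mp hi).2),
    Finset.prod_const]
  rw [Finset.prod_congr rfl (fun i hi => ?_), Finset.prod_const, one_pow, mul_one]
  rcases hf i (Finset.mem_filter.mp hi).1 with h | h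
  · exact h
  · exact absurd h (Finset.mem_filter.mp hi).2

lemma exists_unbal_circuit {A : Set E} :
    ∀ (n : ℕ) (l : List (E × Bool)) (u : V), l.length = n → G.Walks A u l u →
      G.wsign l = -1 →
      ∃ c : Circuit G, c.edgeSet ⊆ A ∧ ¬ c.IsBalanced ∧ G.reachIn A u (c.vert 0) := by
  intro n
  induction n using Nat.strong_induction_on with
  | _ n IH =>
  intro l u hlen hw hsgn
  have hne : l ≠ [] := by rintro rfl; simp at hsgn
  have hnpos : 0 < n := by
    cases l with
    | nil => exact absurd rfl hne
    | cons a t => simp [← hlen]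
  set vs : ℕ → V := fun i => G.vertAt u (l.take i) with hvs
  by_cases hrep : ∃ i j, i < j ∧ j < n ∧ vs i = vs j
  · -- a repeated vertex: split the walk and recurse
    obtain ⟨i, j, hij, hjn, heq⟩ := hrep
    have hilen : i < l.length := by omega
    have hjlen : j ≤ l.length := by omega
    obtain ⟨h1, h2⟩ := walks_take_drop l u u i hw
    obtain ⟨h3, h4⟩ := walks_take_drop (l.drop i) (vs i) u (j - i) h2
    have hkey : G.vertAt (vs i) ((l.drop i).take (j - i)) = vs j := by
      have : l.take j = l.take i ++ (l.drop i).take (j - i) := by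
        rw [← List.take_add (l := l) (i := i) (j := j - i)]
        congr 1
        omega
      rw [hvs]
      simp only [this, vertAt_append]
    rw [hkey] at h3 h4
    set m : List (E × Bool) := (l.drop i).take (j - i) with hm
    set o : List (E × Bool) := l.take i ++ (l.drop i).drop (j - i) with ho
    have wm : G.Walks A (vs i) m (vs i) := by rw [← heq] at h3; exact h3
    have wo : G.Walks A u o u := walks_append h1 (by rw [← heq] at h4; exact h4)
    have hml : m.length = j - i := by
      rw [hm, List.length_take, List.length_drop, hlen]
      omega
    have hol : o.length = n - (j - i) := by
      rw [ho, List.length_append, List.length_take, List.length_drop, List.length_drop,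
        hlen]
      omega
    have hprod : G.wsign l = G.wsign m * G.wsign o := by
      conv_lhs => rw [← List.take_append_drop i l, ← List.take_append_drop (j - i) (l.drop i)]
      rw [wsign_append, wsign_append, ho, wsign_append]
      ring
    rcases wsign_unit (G := G) m with hsm | hsm
    · have hso : G.wsign o = -1 := by
        rw [hprod, hsm, one_mul] at hsgn; exact hsgn
      exact IH o.length (by omega) o u rfl wo hso
    · obtain ⟨c, hc1, hc2, hc3⟩ := IH m.length (by omega) m (vs i) rfl wm hsm
      refine ⟨c, hc1, hc2, Relation.ReflTransGen.trans ?_ hc3⟩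
      exact reach_iff_walks.mpr ⟨l.take i, h1⟩
  · -- all vertices distinct: build an unbalanced circuit
    push_neg at hrep
    have vs_inj : ∀ {i j}, i < n → j < n → vs i = vs j → i = j := by
      intro i j hi hj hvij
      rcases lt_trichotomy i j with h | h | h
      · exact absurd hvij (hrep i j h hj)
      · exact h
      · exact absurd hvij.symm (hrep j i h hi)
    set d : E × Bool := l.head hne with hd
    set st : ℕ → E × Bool := fun i => l.getD i d with hst
    have hdrop : ∀ i < n, l.drop i = st i :: l.drop (i + 1) := by
      intro i hi
      have hi' : i < l.length := by omega
      rw [List.drop_eq_getElem_cons hi']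
      congr 1
      rw [hst]
      exact (List.getD_eq_getElem l d hi').symm
    have hwalkdrop : ∀ i, G.Walks A (vs i) (l.drop i) u := fun i =>
      (walks_take_drop l u u i hw).2
    have FA : ∀ i < n, (st i).1 ∈ A := by
      intro i hi
      have := hwalkdrop i
      rw [hdrop i hi] at this
      exact this.1
    have F5 : ∀ i < n, G.ep (st i) = vs i := by
      intro i hi
      have := hwalkdrop i
      rw [hdrop i hi] at this
      exact this.2.1
    have F4 : ∀ i < n, G.stepDst (st i) = vs ((i + 1) % n) := by
      intro i hi
      have hwi := hwalkdrop i
      rw [hdrop i hi] at hwi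
      have hnext := hwi.2.2
      by_cases hin : i + 1 < n
      · rw [Nat.mod_eq_of_lt hin]
        have hw2 := hwalkdrop (i + 1)
        rw [hdrop (i + 1) hin] at hnext hw2
        rw [← hnext.2.1]
        exact hw2.2.1
      · have hin' : i + 1 = n := by omega
        have : l.drop (i + 1) = [] := by
          apply List.drop_eq_nil_of_le
          omega
        rw [this] at hnext
        rw [hin', Nat.mod_self]
        rw [walks_nil.mp hnext, hvs]
        simp
    have hprodsign : ∏ k ∈ Finset.range n, G.sign (st k).1 = -1 := by
      rw [← hsgn, wsign_eq_prod l d, hlen, hst]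
    refine ⟨⟨n, hnpos, fun i => vs (i % n), fun i => (st (i % n)).1, ?_, ?_, ?_⟩, ?_, ?_, ?_⟩
    · -- vert_inj
      intro i hi j hj hvij
      have hvij' : vs (i % n) = vs (j % n) := hvij
      rw [Nat.mod_eq_of_lt hi, Nat.mod_eq_of_lt hj] at hvij'
      exact vs_inj hi hj hvij'
    · -- edge_inj
      intro i hi j hj he0
      have he : (st (i % n)).1 = (st (j % n)).1 := he0
      rw [Nat.mod_eq_of_lt hi, Nat.mod_eq_of_lt hj] at he
      by_cases hb : (st i).2 = (st j).2
      · -- same direction: same source vertex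
        have hep : G.ep (st i) = G.ep (st j) := by
          have : st i = st j := Prod.ext he hb
          rw [this]
        rw [F5 i hi, F5 j hj] at hep
        exact vs_inj hi hj hep
      · -- opposite directions
        have hb' : (st i).2 = !(st j).2 := by
          cases h1 : (st i).2 <;> cases h2 : (st j).2 <;> simp_all
        have hep1 : G.ep (st i) = G.stepDst (st j) := by
          rw [stepDst]
          have : st i = ((st j).1, !(st j).2) := Prod.ext (by rw [he]) hb'
          rw [this]
        have hep2 : G.stepDst (st i) = G.ep (st j) := by
          rw [stepDst]
          have : ((st i).1, !(st i).2) = st j := Prod.ext (by rw [he]) (by rw [hb', Bool.not_not])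
          rw [this]
        rw [F5 i hi, F4 j hj] at hep1
        rw [F4 i hi, F5 j hj] at hep2
        have e1 : i = (j + 1) % n := vs_inj hi (Nat.mod_lt _ hnpos) hep1
        have e2 : (i + 1) % n = j := vs_inj (Nat.mod_lt _ hnpos) hj hep2
        -- arithmetic case analysis
        rcases Nat.lt_or_ge n 3 with hn3 | hn3
        · interval_cases n
          · omega
          · -- n = 2 : the two steps use the same edge, so the sign is positive
            exfalso
            have : ∏ k ∈ Finset.range 2, G.sign (st k).1 = -1 := hprodsign
            rw [Finset.prod_range_succ, Finset.prod_range_one] at this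
            have hij' : (st 0).1 = (st 1).1 := by
              rcases Nat.lt_or_ge i j with h | h
              · have : i = 0 ∧ j = 1 := by omega
                rw [← this.1, ← this.2]; exact he
              · rcases Nat.lt_or_ge j i with h' | h'
                · have : j = 0 ∧ i = 1 := by omega
                  rw [← this.1, ← this.2]; exact he.symm
                · omega
            rw [hij'] at this
            rw [sign_sq] at this
            norm_num at this
        · -- n ≥ 3
          rcases Nat.lt_or_ge (j + 1) n with hj1 | hj1
          · rw [Nat.mod_eq_of_lt hj1] at e1
            rcases Nat.lt_or_ge (i + 1) n with hi1 | hi1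
            · rw [Nat.mod_eq_of_lt hi1] at e2; omega
            · have : i + 1 = n := by omega
              rw [this, Nat.mod_self] at e2; omega
          · have : j + 1 = n := by omega
            rw [this, Nat.mod_self] at e1
            rcases Nat.lt_or_ge (i + 1) n with hi1 | hi1
            · rw [Nat.mod_eq_of_lt hi1] at e2; omega
            · have h2 : i + 1 = n := by omega
              rw [h2, Nat.mod_self] at e2; omega
    · -- ends
      intro i hi
      simp only [Nat.mod_eq_of_lt hi]
      have h5 := F5 i hi
      have h4 := F4 i hi
      have hmod : (i + 1) % n % n = (i + 1) % n := Nat.mod_eq_of_lt (Nat.mod_lt _ hnpos)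
      rw [hmod]
      cases hb : (st i).2
      · exact Or.inr ⟨by rw [← ep_of_false hb]; exact h5, by rw [← stepDst_of_false hb]; exact h4⟩
      · exact Or.inl ⟨by rw [← ep_of_true hb]; exact h5, by rw [← stepDst_of_true hb]; exact h4⟩
    · -- edgeSet ⊆ A
      rintro e ⟨i, hi, rfl⟩
      exact FA (i % n) (Nat.mod_lt _ hnpos)
    · -- unbalanced
      intro hbal
      have heven : Even ({i : ℕ | i < n ∧ G.sign (st (i % n)).1 = -1}).ncard := hbal
      have hcard : ({i : ℕ | i < n ∧ G.sign (st (i % n)).1 = -1}).ncard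
          = ((Finset.range n).filter (fun k => G.sign (st k).1 = -1)).card := by
        rw [← Set.ncard_coe_finset]
        congr 1
        ext k
        simp only [Set.mem_setOf_eq, Finset.coe_filter, Finset.mem_range]
        constructor
        · rintro ⟨hk, hs⟩
          rw [Nat.mod_eq_of_lt hk] at hs
          exact ⟨hk, hs⟩
        · rintro ⟨hk, hs⟩
          rw [Nat.mod_eq_of_lt hk]
          exact ⟨hk, hs⟩
      rw [hcard] at heven
      have hpow := neg_one_pow_card_of_prod (s := Finset.range n)
        (f := fun k => G.sign (st k).1) (fun k _ => G.sign_unit (st k).1)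
      rw [hprodsign, Even.neg_one_pow heven] at hpow
      norm_num at hpow
    · -- reachability of vert 0
      show G.reachIn A u (vs (0 % n))
      rw [Nat.zero_mod]
      exact Relation.ReflTransGen.refl

end SignedGraph

end Key
section Forward

open Finset
open scoped Classical

variable {V E : Type} [Fintype V] [Fintype E]

namespace SignedGraph

lemma not_admissible_of_one_negative (G : SignedGraph V E)
    (h : ∃ σ' : E → ℤ, G.SwitchEquiv σ' ∧ {e | σ' e = -1}.ncard = 1) :
    ¬ G.FlowAdmissible := by
  rintro hadm
  obtain ⟨σ', ⟨ε, hε, hσ'⟩, hcard⟩ := h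
  obtain ⟨f, hf, hnz⟩ := flowAdmissible_iff.mp hadm
  obtain ⟨e0, he0⟩ := Set.ncard_eq_one.mp hcard
  have hcoeff : ∀ e, ε (G.fst e) - G.sign e * ε (G.snd e) = ε (G.fst e) * (1 - σ' e) := by
    intro e
    rw [hσ' e]
    have h1 := hε (G.fst e)
    rcases h1 with h1 | h1 <;> rw [h1] <;> ring
  have hσ'unit : ∀ e, σ' e = 1 ∨ σ' e = -1 := by
    intro e
    rcases hε (G.fst e) with h1 | h1 <;> rcases hε (G.snd e) with h2 | h2 <;>
      rcases G.sign_unit e with h3 | h3 <;> rw [hσ' e, h1, h2, h3] <;> norm_num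
  have he0neg : σ' e0 = -1 := by
    have : e0 ∈ {e | σ' e = -1} := by rw [he0]; rfl
    exact this
  have hpos : ∀ e, e ≠ e0 → σ' e = 1 := by
    intro e he
    rcases hσ'unit e with h1 | h1
    · exact h1
    · exfalso
      have : e ∈ {e | σ' e = -1} := h1
      rw [he0] at this
      exact he this
  have hsum := sum_weighted_boundary (G := G) ε f
  rw [Finset.sum_congr rfl (fun v _ => by rw [hf v, mul_zero])] at hsum
  rw [Finset.sum_const, smul_zero] at hsum
  have hsum2 : ∑ e, (ε (G.fst e) - G.sign e * ε (G.snd e)) * f e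
      = ε (G.fst e0) * 2 * f e0 := by
    rw [Finset.sum_eq_single e0]
    · rw [hcoeff e0, he0neg]; ring
    · intro e _ he
      rw [hcoeff e, hpos e he]
      ring
    · intro h; exact absurd (mem_univ e0) h
  rw [hsum2] at hsum
  rcases hε (G.fst e0) with h1 | h1 <;> rw [h1] at hsum <;>
    [skip; skip] <;> exact hnz e0 (by omega)

lemma not_admissible_of_bridge (G : SignedGraph V E) (hconn : G.Connected)
    (h : ∃ b : E, G.IsBridge b ∧ G.HasBalancedComponentWithout b) :
    ¬ G.FlowAdmissible := by
  rintro hadm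
  obtain ⟨f, hf, hnz⟩ := flowAdmissible_iff.mp hadm
  obtain ⟨b, hbr, v, hbal⟩ := h
  set A : Set E := {e | e ≠ b} with hA
  -- all walks from v to a fixed vertex have the same sign
  have huniq : ∀ x (l1 l2 : List (E × Bool)), G.Walks A v l1 x → G.Walks A v l2 x →
      G.wsign l1 = G.wsign l2 := by
    intro x l1 l2 h1 h2
    by_contra hcon
    have hsgn : G.wsign (l1 ++ l2.reverse.map stepFlip) = -1 := by
      rw [wsign_append, wsign_reverse_flip]
      rcases wsign_unit (G := G) l1 with hs1 | hs1 <;>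
        rcases wsign_unit (G := G) l2 with hs2 | hs2 <;>
        rw [hs1, hs2] <;> first
          | (exact absurd (hs1.trans hs2.symm) hcon)
          | norm_num
    have hcw : G.Walks A v (l1 ++ l2.reverse.map stepFlip) v :=
      walks_append h1 (walks_reverse h2)
    obtain ⟨c, hcA, hcunbal, hcreach⟩ :=
      exists_unbal_circuit (l1 ++ l2.reverse.map stepFlip).length _ v rfl hcw hsgn
    exact hcunbal (hbal c hcA hcreach)
  -- the weight function
  set W : V → ℤ := fun x =>
    if hx : ∃ l, G.Walks A v l x then G.wsign (Classical.choose hx) else 0 with hW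
  have hWeq : ∀ x (l : List (E × Bool)), G.Walks A v l x → W x = G.wsign l := by
    intro x l hl
    have hx : ∃ l, G.Walks A v l x := ⟨l, hl⟩
    rw [hW]
    simp only [dif_pos hx]
    exact huniq x _ l (Classical.choose_spec hx) hl
  have hW0 : ∀ x, ¬ G.reachIn A v x → W x = 0 := by
    intro x hx
    rw [hW]
    simp only []
    rw [dif_neg]
    intro hcon
    exact hx (reach_iff_walks.mpr hcon)
  have hWunit : ∀ x, G.reachIn A v x → W x = 1 ∨ W x = -1 := by
    intro x hx
    obtain ⟨l, hl⟩ := reach_iff_walks.mp hx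
    rw [hWeq x l hl]
    exact wsign_unit l
  -- edges other than b have vanishing coefficient
  have hcoeff : ∀ e, e ≠ b → W (G.fst e) - G.sign e * W (G.snd e) = 0 := by
    intro e he
    by_cases hr : G.reachIn A v (G.fst e)
    · obtain ⟨l, hl⟩ := reach_iff_walks.mp hr
      have hstep : G.Walks A v (l ++ [(e, true)]) (G.snd e) := by
        refine walks_append hl (walks_cons.mpr ⟨he, ?_, walks_nil.mpr ?_⟩)
        · exact ep_of_true rfl
        · exact stepDst_of_true (h := (e, true)) rfl
      have h1 := hWeq _ _ hl
      have h2 := hWeq _ _ hstep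
      rw [wsign_append, wsign_cons, wsign_nil] at h2
      have h2' : W (G.snd e) = G.wsign l * G.sign e := by
        rw [h2]; simp [mul_comm]
      rw [h1, h2']
      linear_combination (-G.wsign l) * sign_sq (G := G) e
    · have hr2 : ¬ G.reachIn A v (G.snd e) := by
        intro hr2
        apply hr
        obtain ⟨l, hl⟩ := reach_iff_walks.mp hr2
        refine reach_iff_walks.mpr ⟨l ++ [(e, false)], walks_append hl
          (walks_cons.mpr ⟨he, ?_, walks_nil.mpr ?_⟩)⟩
        · exact ep_of_false rfl
        · exact stepDst_of_false (h := (e, false)) rfl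
      rw [hW0 _ hr, hW0 _ hr2]
      ring
  -- exactly one endpoint of b is reachable from v
  have hreach_b : G.reachIn A v (G.fst b) ∨ G.reachIn A v (G.snd b) := by
    have key : ∀ x y : V, G.reachIn Set.univ x y →
        (G.reachIn A x y ∨ G.reachIn A x (G.fst b) ∨ G.reachIn A x (G.snd b)) := by
      intro x y hxy
      induction hxy with
      | refl => exact Or.inl .refl
      | tail hr ha ih =>
          obtain ⟨e, _, hends⟩ := ha
          by_cases heb : e = b
          · subst heb
            rcases ih with h1 | h1 | h1
            · rcases hends with ⟨h2, h3⟩ | ⟨h2, h3⟩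
              · exact Or.inr (Or.inl (h2 ▸ h1))
              · exact Or.inr (Or.inr (h3 ▸ h1))
            · exact Or.inr (Or.inl h1)
            · exact Or.inr (Or.inr h1)
          · rcases ih with h1 | h1 | h1
            · exact Or.inl (h1.tail ⟨e, heb, hends⟩)
            · exact Or.inr (Or.inl h1)
            · exact Or.inr (Or.inr h1)
    rcases key v (G.fst b) (hconn v (G.fst b)) with h1 | h1 | h1
    · exact Or.inl h1
    · exact Or.inl h1
    · exact Or.inr h1
  have hnotboth : ¬ (G.reachIn A v (G.fst b) ∧ G.reachIn A v (G.snd b)) := by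
    rintro ⟨h1, h2⟩
    exact hbr ((reach_symm h1).trans h2)
  -- the key sum
  have hsum := sum_weighted_boundary (G := G) W f
  rw [Finset.sum_congr rfl (fun x _ => by rw [hf x, mul_zero])] at hsum
  rw [Finset.sum_const, smul_zero] at hsum
  have hsum2 : ∑ e, (W (G.fst e) - G.sign e * W (G.snd e)) * f e
      = (W (G.fst b) - G.sign b * W (G.snd b)) * f b := by
    rw [Finset.sum_eq_single b]
    · intro e _ he
      rw [hcoeff e he, zero_mul]
    · intro hcon; exact absurd (mem_univ b) hcon
  rw [hsum2] at hsum
  have hfb : f b ≠ 0 := hnz b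
  rcases hreach_b with h1 | h1
  · have h2 : ¬ G.reachIn A v (G.snd b) := fun h2 => hnotboth ⟨h1, h2⟩
    rw [hW0 _ h2, mul_zero, sub_zero] at hsum
    rcases hWunit _ h1 with h3 | h3 <;> rw [h3] at hsum <;> omega
  · have h2 : ¬ G.reachIn A v (G.fst b) := fun h2 => hnotboth ⟨h2, h1⟩
    rw [hW0 _ h2, zero_sub] at hsum
    rcases hWunit _ h1 with h3 | h3 <;> rw [h3] at hsum <;>
      rcases G.sign_unit b with h4 | h4 <;> rw [h4] at hsum <;> omega

end SignedGraph

end Forward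
section Backward

open Finset
open scoped Classical

variable {V E : Type} [Fintype V] [Fintype E]

namespace SignedGraph

variable {G : SignedGraph V E}

lemma flow0_zero : G.Flow0 (fun _ => 0) := by
  intro v
  rw [boundary_eq_sum]
  simp

lemma flow0_combine {f g : E → ℤ} (hf : G.Flow0 f) (hg : G.Flow0 g) (c : ℤ) :
    G.Flow0 (fun e => c * g e + f e) := by
  intro v
  have h1 := hf v
  have h2 := hg v
  rw [boundary_eq_sum] at h1 h2 ⊢
  have h3 : ∑ h ∈ univ.filter (fun h : E × Bool => G.ep h = v),
      G.tau0 h * (c * g h.1 + f h.1)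
      = c * (∑ h ∈ univ.filter (fun h : E × Bool => G.ep h = v), G.tau0 h * g h.1)
        + ∑ h ∈ univ.filter (fun h : E × Bool => G.ep h = v), G.tau0 h * f h.1 := by
    rw [Finset.mul_sum, ← Finset.sum_add_distrib]
    exact Finset.sum_congr rfl fun h _ => by ring
  rw [h3, h1, h2]
  ring

lemma flow0_glue (hall : ∀ e : E, ∃ f, G.Flow0 f ∧ f e ≠ 0) :
    ∃ f, G.Flow0 f ∧ ∀ e, f e ≠ 0 := by
  have main : ∀ s : Finset E, ∃ f, G.Flow0 f ∧ ∀ e ∈ s, f e ≠ 0 := by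
    intro s
    induction s using Finset.induction with
    | empty => exact ⟨fun _ => 0, flow0_zero, by simp⟩
    | @insert a s ha ih =>
        obtain ⟨f, hf, hfs⟩ := ih
        obtain ⟨g, hg, hga⟩ := hall a
        set c : ℤ := 1 + ∑ e, |f e| with hc
        have hsum_nonneg : (0:ℤ) ≤ ∑ e, |f e| := Finset.sum_nonneg fun e _ => abs_nonneg _
        have hcpos : 0 < c := by omega
        refine ⟨fun e => c * g e + f e, flow0_combine hf hg c, ?_⟩
        intro e he hF0
        replace hF0 : c * g e + f e = 0 := hF0
        have hcases : g e ≠ 0 ∨ f e ≠ 0 := by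
          rcases Finset.mem_insert.mp he with rfl | hes
          · exact Or.inl hga
          · exact Or.inr (hfs e hes)
        rcases eq_or_ne (g e) 0 with hg0 | hg0
        · rw [hg0, mul_zero, zero_add] at hF0
          rcases hcases with h | h
          · exact h hg0
          · exact h hF0
        · have h1 : |f e| ≤ ∑ e, |f e| :=
            Finset.single_le_sum (fun e _ => abs_nonneg (f e)) (Finset.mem_univ e)
          have h2 : 1 ≤ |g e| := Int.one_le_abs hg0
          have h3 : c * g e = - f e := by linarith
          have h4 : |c * g e| = |f e| := by rw [h3, abs_neg]
          rw [abs_mul, abs_of_pos hcpos] at h4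
          nlinarith [mul_le_mul_of_nonneg_left h2 hcpos.le]
  obtain ⟨f, hf, hfs⟩ := main Finset.univ
  exact ⟨f, hf, fun e => hfs e (Finset.mem_univ e)⟩

variable (G)

/-- The boundary operator over ℚ. -/
noncomputable def Dmap : (E → ℚ) →ₗ[ℚ] (V → ℚ) where
  toFun f := fun v => ∑ h ∈ univ.filter (fun h : E × Bool => G.ep h = v),
    (if h.2 then (1:ℚ) else -(G.sign h.1 : ℚ)) * f h.1
  map_add' f g := by
    funext v
    simp only [Pi.add_apply]
    rw [← Finset.sum_add_distrib]
    exact Finset.sum_congr rfl fun h _ => by ring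
  map_smul' c f := by
    funext v
    simp only [Pi.smul_apply, smul_eq_mul, RingHom.id_apply]
    rw [Finset.mul_sum]
    exact Finset.sum_congr rfl fun h _ => by ring

variable {G}

lemma boundary_cast (f : E → ℤ) (v : V) :
    ((G.boundary G.tau0 f v : ℤ) : ℚ) = G.Dmap (fun e => (f e : ℚ)) v := by
  rw [boundary_eq_sum]
  show ((∑ h ∈ _, _ : ℤ) : ℚ) = ∑ h ∈ _, _
  rw [Int.cast_sum]
  apply Finset.sum_congr rfl
  rintro ⟨e, b⟩ _
  cases b <;> simp [tau0] <;> push_cast <;> ring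

lemma int_flow_of_rat (f : E → ℚ) (hf : G.Dmap f = 0) :
    ∃ (g : E → ℤ) (d : ℤ), 0 < d ∧ (∀ e, (g e : ℚ) = (d : ℚ) * f e) ∧ G.Flow0 g := by
  set d : ℤ := ∏ e, ((f e).den : ℤ) with hd
  have hdpos : 0 < d := Finset.prod_pos fun e _ => by
    exact_mod_cast (f e).den_pos
  set g : E → ℤ := fun e => (f e).num * ∏ e' ∈ univ.erase e, ((f e').den : ℤ) with hg
  have hcast : ∀ e, (g e : ℚ) = (d : ℚ) * f e := by
    intro e
    have hsplit : d = ((f e).den : ℤ) * ∏ e' ∈ univ.erase e, ((f e').den : ℤ) := by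
      rw [hd, ← Finset.mul_prod_erase univ _ (Finset.mem_univ e)]
    rw [hg, hsplit]
    push_cast
    rw [← Rat.mul_den_eq_num]
    ring
  refine ⟨g, d, hdpos, hcast, ?_⟩
  intro v
  have hq : ((G.boundary G.tau0 g v : ℤ) : ℚ) = 0 := by
    rw [boundary_cast]
    have : (fun e => ((g e : ℤ) : ℚ)) = (d : ℚ) • f := by
      funext e
      simp [hcast e]
    rw [this, map_smul, hf]
    simp
  exact_mod_cast hq

/-- The ℚ-version of the weighted-boundary summation identity. -/
lemma sum_weighted_Dmap (w : V → ℚ) (f : E → ℚ) :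
    ∑ v, w v * G.Dmap f v
      = ∑ e, (w (G.fst e) - (G.sign e : ℚ) * w (G.snd e)) * f e := by
  have h1 : ∀ v, w v * G.Dmap f v
      = ∑ h ∈ univ.filter (fun h : E × Bool => G.ep h = v),
          w (G.ep h) * ((if h.2 then (1:ℚ) else -(G.sign h.1 : ℚ)) * f h.1) := by
    intro v
    show w v * ∑ h ∈ _, _ = _
    rw [Finset.mul_sum]
    apply Finset.sum_congr rfl
    intro h hh
    rw [mem_filter] at hh
    rw [hh.2]
  calc ∑ v, w v * G.Dmap f v
      = ∑ v, ∑ h ∈ univ.filter (fun h : E × Bool => G.ep h = v),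
          w (G.ep h) * ((if h.2 then (1:ℚ) else -(G.sign h.1 : ℚ)) * f h.1) :=
        Finset.sum_congr rfl fun v _ => h1 v
    _ = ∑ h : E × Bool, w (G.ep h) * ((if h.2 then (1:ℚ) else -(G.sign h.1 : ℚ)) * f h.1) :=
        Finset.sum_fiberwise _ _ _
    _ = ∑ e, (w (G.fst e) - (G.sign e : ℚ) * w (G.snd e)) * f e := by
        rw [Fintype.sum_prod_type]
        apply Finset.sum_congr rfl
        intro e _
        rw [Fintype.sum_bool]
        simp [ep]
        ring

lemma exists_potential (e : E) (h0 : ∀ f, G.Flow0 f → f e = 0) :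
    ∃ w : V → ℚ, (∀ e', e' ≠ e → w (G.fst e') - (G.sign e' : ℚ) * w (G.snd e') = 0) ∧
      w (G.fst e) - (G.sign e : ℚ) * w (G.snd e) = 1 := by
  have hker : ∀ f ∈ LinearMap.ker G.Dmap, f e = 0 := by
    intro f hf
    obtain ⟨g, d, hdpos, hgd, hg⟩ := int_flow_of_rat f (LinearMap.mem_ker.mp hf)
    have h1 := h0 g hg
    have h2 : (d : ℚ) * f e = 0 := by
      rw [← hgd e, h1, Int.cast_zero]
    rcases mul_eq_zero.mp h2 with h3 | h3
    · exfalso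
      have : (d : ℚ) ≠ 0 := by positivity
      exact this h3
    · exact h3
  have hmem : (LinearMap.proj e : (E → ℚ) →ₗ[ℚ] ℚ)
      ∈ (LinearMap.ker G.Dmap).dualAnnihilator := by
    rw [Submodule.mem_dualAnnihilator]
    intro f hf
    exact hker f hf
  rw [← LinearMap.range_dualMap_eq_dualAnnihilator_ker] at hmem
  obtain ⟨φ, hφ⟩ := hmem
  set w : V → ℚ := fun u => φ (fun j => if u = j then 1 else 0) with hw
  have hφeq : ∀ g : V → ℚ, φ g = ∑ u, g u * w u := by
    intro g
    conv_lhs => rw [pi_eq_sum_univ g]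
    rw [map_sum]
    apply Finset.sum_congr rfl
    intro u _
    rw [map_smul, smul_eq_mul]
  have hval : ∀ e' : E, w (G.fst e') - (G.sign e' : ℚ) * w (G.snd e')
      = if e' = e then 1 else 0 := by
    intro e'
    have h2 := LinearMap.congr_fun hφ (Pi.single e' (1:ℚ))
    rw [LinearMap.dualMap_apply, LinearMap.proj_apply] at h2
    rw [hφeq] at h2
    have h3 : ∑ u, (G.Dmap (Pi.single e' 1)) u * w u
        = ∑ u, w u * (G.Dmap (Pi.single e' 1)) u :=
      Finset.sum_congr rfl fun u _ => mul_comm _ _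
    rw [h3, sum_weighted_Dmap] at h2
    have h4 : ∑ e'', (w (G.fst e'') - (G.sign e'' : ℚ) * w (G.snd e'')) * (Pi.single e' (1:ℚ) : E → ℚ) e''
        = w (G.fst e') - (G.sign e' : ℚ) * w (G.snd e') := by
      rw [Finset.sum_eq_single e']
      · rw [Pi.single_eq_same, mul_one]
      · intro e'' _ hne
        rw [Pi.single_eq_of_ne hne, mul_zero]
      · intro hcon
        exact absurd (Finset.mem_univ e') hcon
    rw [h4] at h2
    rw [h2]
    rcases eq_or_ne e' e with rfl | hne
    · rw [Pi.single_eq_same, if_pos rfl]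
    · rw [Pi.single_eq_of_ne (Ne.symm hne), if_neg hne]
  refine ⟨w, fun e' hne => ?_, ?_⟩
  · rw [hval e', if_neg hne]
  · rw [hval e, if_pos rfl]

end SignedGraph

end Backward
section Final

open Finset
open scoped Classical

variable {V E : Type} [Fintype V] [Fintype E] {G : SignedGraph V E}

namespace SignedGraph

lemma sign_cast_cases (e : E) : ((G.sign e : ℤ) : ℚ) = 1 ∨ ((G.sign e : ℤ) : ℚ) = -1 := by
  rcases G.sign_unit e with h | h
  · left; rw [h]; norm_num
  · right; rw [h]; norm_num

lemma sign_cast_sq (e : E) : ((G.sign e : ℤ) : ℚ) * ((G.sign e : ℤ) : ℚ) = 1 := by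
  have := sign_sq (G := G) e
  exact_mod_cast this

lemma two_val_of_harmonic {w : V → ℚ} {e : E}
    (hh : ∀ e', e' ≠ e → w (G.fst e') - (G.sign e' : ℚ) * w (G.snd e') = 0) :
    ∀ x y : V, G.reachIn {e' | e' ≠ e} x y → w y = w x ∨ w y = -w x := by
  intro x y h
  induction h with
  | refl => exact Or.inl rfl
  | tail hr ha ih =>
      rename_i b c
      obtain ⟨e', he', hends⟩ := ha
      have hh' := hh e' he'
      have hsq := sign_cast_sq (G := G) e'
      have hpm : w c = (G.sign e' : ℚ) * w b := by
        rcases hends with ⟨h1, h2⟩ | ⟨h1, h2⟩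
        · rw [h1, h2] at hh'
          have : w b = (G.sign e' : ℚ) * w c := by linarith
          calc w c = ((G.sign e' : ℚ) * (G.sign e' : ℚ)) * w c := by rw [hsq, one_mul]
            _ = (G.sign e' : ℚ) * ((G.sign e' : ℚ) * w c) := by ring
            _ = (G.sign e' : ℚ) * w b := by rw [← this]
        · rw [h1, h2] at hh'
          linarith
      rcases sign_cast_cases (G := G) e' with hs | hs <;> rw [hs] at hpm
      · rw [one_mul] at hpm
        rw [hpm]
        exact ih
      · rcases ih with h1 | h1
        · right; rw [hpm, h1]; ring
        · left; rw [hpm, h1]; ring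

lemma balanced_of_potential {w : V → ℚ} {e : E}
    (hh : ∀ e', e' ≠ e → w (G.fst e') - (G.sign e' : ℚ) * w (G.snd e') = 0)
    (v : V) (hv : w v ≠ 0) :
    ∀ c : Circuit G, c.edgeSet ⊆ {e' | e' ≠ e} →
      G.reachIn {e' | e' ≠ e} v (c.vert 0) → c.IsBalanced := by
  intro c hsub hreach
  have hnpos := c.n_pos
  have hmem : ∀ i, i < c.n → c.edge i ≠ e := by
    intro i hi
    exact hsub ⟨i, hi, rfl⟩
  -- all circuit vertices are reachable from v
  have hreachverts : ∀ i, i < c.n → G.reachIn {e' | e' ≠ e} v (c.vert i) := by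
    intro i
    induction i with
    | zero => intro _; exact hreach
    | succ i ih =>
        intro hin
        have hi : i < c.n := by omega
        have hprev := ih hi
        have hadj : G.adjIn {e' | e' ≠ e} (c.vert i) (c.vert ((i + 1) % c.n)) := by
          refine ⟨c.edge i, hmem i hi, ?_⟩
          rcases c.ends i hi with ⟨h1, h2⟩ | ⟨h1, h2⟩
          · exact Or.inl ⟨h1, h2⟩
          · exact Or.inr ⟨h2, h1⟩
        have hmod : (i + 1) % c.n = i + 1 := Nat.mod_eq_of_lt hin
        rw [hmod] at hadj
        exact hprev.tail hadj
  have hwne : ∀ i, i < c.n → w (c.vert i) ≠ 0 := by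
    intro i hi
    rcases two_val_of_harmonic hh v (c.vert i) (hreachverts i hi) with h1 | h1 <;> rw [h1]
    · exact hv
    · simpa using hv
  have hstep : ∀ i, i < c.n →
      w (c.vert i) = (G.sign (c.edge i) : ℚ) * w (c.vert ((i + 1) % c.n)) := by
    intro i hi
    have hh' := hh (c.edge i) (hmem i hi)
    have hsq := sign_cast_sq (G := G) (c.edge i)
    rcases c.ends i hi with ⟨h1, h2⟩ | ⟨h1, h2⟩
    · rw [h1, h2] at hh'
      linarith
    · rw [h1, h2] at hh'
      have : w (c.vert ((i + 1) % c.n)) = (G.sign (c.edge i) : ℚ) * w (c.vert i) := by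
        linarith
      calc w (c.vert i)
          = ((G.sign (c.edge i) : ℚ) * (G.sign (c.edge i) : ℚ)) * w (c.vert i) := by
            rw [hsq, one_mul]
        _ = (G.sign (c.edge i) : ℚ) * ((G.sign (c.edge i) : ℚ) * w (c.vert i)) := by ring
        _ = (G.sign (c.edge i) : ℚ) * w (c.vert ((i + 1) % c.n)) := by rw [← this]
  have hP : (∏ i ∈ Finset.range c.n, w (c.vert i)) ≠ 0 :=
    Finset.prod_ne_zero_iff.mpr fun i hi => hwne i (Finset.mem_range.mp hi)
  have hreindex : ∏ i ∈ Finset.range c.n, w (c.vert ((i + 1) % c.n))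
      = ∏ i ∈ Finset.range c.n, w (c.vert i) := by
    refine Finset.prod_nbij' (fun a => (a + 1) % c.n) (fun a => (a + (c.n - 1)) % c.n)
      ?_ ?_ ?_ ?_ ?_
    · intro a ha
      exact Finset.mem_range.mpr (Nat.mod_lt _ hnpos)
    · intro a ha
      exact Finset.mem_range.mpr (Nat.mod_lt _ hnpos)
    · intro a ha
      show ((a + 1) % c.n + (c.n - 1)) % c.n = a
      rw [Nat.mod_add_mod]
      have h1 : a + 1 + (c.n - 1) = a + c.n := by omega
      rw [h1, Nat.add_mod_right, Nat.mod_eq_of_lt (Finset.mem_range.mp ha)]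
    · intro a ha
      show ((a + (c.n - 1)) % c.n + 1) % c.n = a
      rw [Nat.mod_add_mod]
      have h1 : a + (c.n - 1) + 1 = a + c.n := by omega
      rw [h1, Nat.add_mod_right, Nat.mod_eq_of_lt (Finset.mem_range.mp ha)]
    · intro a ha
      rfl
  have hprodeq : ∏ i ∈ Finset.range c.n, w (c.vert i)
      = (∏ i ∈ Finset.range c.n, (G.sign (c.edge i) : ℚ))
        * ∏ i ∈ Finset.range c.n, w (c.vert ((i + 1) % c.n)) := by
    rw [← Finset.prod_mul_distrib]
    exact Finset.prod_congr rfl fun i hi => hstep i (Finset.mem_range.mp hi)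
  rw [hreindex] at hprodeq
  have hS : (∏ i ∈ Finset.range c.n, (G.sign (c.edge i) : ℚ)) = 1 := by
    apply mul_right_cancel₀ hP
    rw [one_mul]
    exact hprodeq.symm
  have hSZ : (∏ i ∈ Finset.range c.n, G.sign (c.edge i)) = 1 := by
    have : ((∏ i ∈ Finset.range c.n, G.sign (c.edge i) : ℤ) : ℚ)
        = ∏ i ∈ Finset.range c.n, (G.sign (c.edge i) : ℚ) := by push_cast; rfl
    rw [hS] at this
    exact_mod_cast this
  -- conclude evenness
  show Even c.negCount
  have hcard : c.negCount
      = ((Finset.range c.n).filter (fun k => G.sign (c.edge k) = -1)).card := by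
    rw [Circuit.negCount, ← Set.ncard_coe_finset]
    congr 1
    ext k
    simp [Finset.mem_filter, Finset.mem_range]
  rw [hcard]
  by_contra hodd
  have hoddk := Nat.not_even_iff_odd.mp hodd
  have hpow := neg_one_pow_card_of_prod (s := Finset.range c.n)
    (f := fun k => G.sign (c.edge k)) (fun k _ => G.sign_unit (c.edge k))
  rw [hSZ, Odd.neg_one_pow hoddk] at hpow
  norm_num at hpow

lemma backward_direction (G : SignedGraph V E) (hconn : G.Connected)
    (h1 : ¬ ∃ σ' : E → ℤ, G.SwitchEquiv σ' ∧ {e | σ' e = -1}.ncard = 1)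
    (h2 : ¬ ∃ b : E, G.IsBridge b ∧ G.HasBalancedComponentWithout b) :
    G.FlowAdmissible := by
  rw [flowAdmissible_iff]
  apply flow0_glue
  intro e
  by_contra hcon
  push_neg at hcon
  have h0 : ∀ f, G.Flow0 f → f e = 0 := by
    intro f hf
    by_contra hne
    exact hne (hcon f hf)
  obtain ⟨w, hh, heq⟩ := exists_potential e h0
  by_cases hbr : G.IsBridge e
  · -- bridge case: G − e has a balanced component
    apply h2
    refine ⟨e, hbr, ?_⟩
    have hnz : w (G.fst e) ≠ 0 ∨ w (G.snd e) ≠ 0 := by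
      by_contra hboth
      push_neg at hboth
      rw [hboth.1, hboth.2, mul_zero, sub_zero] at heq
      norm_num at heq
    rcases hnz with hv | hv
    · exact ⟨G.fst e, balanced_of_potential hh (G.fst e) hv⟩
    · exact ⟨G.snd e, balanced_of_potential hh (G.snd e) hv⟩
  · -- non-bridge case: switching-equivalent to a single negative edge
    apply h1
    have hee : G.reachIn {e' | e' ≠ e} (G.fst e) (G.snd e) := not_not.mp hbr
    have hAreach : ∀ x y : V, G.reachIn Set.univ x y → G.reachIn {e' | e' ≠ e} x y := by
      intro x y hxy
      induction hxy with
      | refl => exact .refl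
      | tail hr ha ih =>
          obtain ⟨e', _, hends⟩ := ha
          by_cases heb : e' = e
          · subst heb
            rcases hends with ⟨hf1, hf2⟩ | ⟨hf1, hf2⟩
            · refine ih.trans ?_
              rw [← hf1, ← hf2]
              exact hee
            · refine ih.trans ?_
              rw [← hf1, ← hf2]
              exact reach_symm hee
          · exact ih.tail ⟨e', heb, hends⟩
    have hall : ∀ u, w u = w (G.fst e) ∨ w u = -w (G.fst e) := fun u =>
      two_val_of_harmonic hh (G.fst e) u (hAreach _ _ (hconn (G.fst e) u))
    have ha : w (G.fst e) = 1/2 := by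
      rcases hall (G.snd e) with hc | hc <;>
        rcases sign_cast_cases (G := G) e with hs | hs <;>
        rw [hc, hs] at heq <;> first
          | linarith
          | (exfalso; linarith)
    have hval : ∀ u, w u = 1/2 ∨ w u = -(1/2) := by
      intro u
      rcases hall u with h | h <;> rw [h, ha]
      · exact Or.inl rfl
      · exact Or.inr rfl
    set ε : V → ℤ := fun u => if w u = 1/2 then 1 else -1 with hε
    have hεunit : ∀ u, ε u = 1 ∨ ε u = -1 := by
      intro u
      by_cases h : w u = 1/2
      · left
        show (if w u = 1/2 then (1:ℤ) else -1) = 1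
        rw [if_pos h]
      · right
        show (if w u = 1/2 then (1:ℤ) else -1) = -1
        rw [if_neg h]
    have hεval : ∀ u, ((ε u : ℤ) : ℚ) = 2 * w u := by
      intro u
      rcases hval u with h | h
      · simp only [hε]
        rw [if_pos h, h]
        norm_num
      · have hne : ¬ (w u = 1/2) := by rw [h]; norm_num
        simp only [hε]
        rw [if_neg hne, h]
        norm_num
    set σ' : E → ℤ := fun e' => ε (G.fst e') * ε (G.snd e') * G.sign e' with hσ'
    refine ⟨σ', ⟨ε, hεunit, fun e' => rfl⟩, ?_⟩
    have hone : ∀ e', e' ≠ e → σ' e' = 1 := by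
      intro e' hne
      have hh' := hh e' hne
      have hcalc : ((σ' e' : ℤ) : ℚ)
          = 4 * w (G.fst e') * w (G.snd e') * (G.sign e' : ℚ) := by
        rw [hσ']
        push_cast
        rw [hεval, hεval]
        push_cast
        ring
      have hfst : w (G.fst e') = (G.sign e' : ℚ) * w (G.snd e') := by linarith
      have hsq := sign_cast_sq (G := G) e'
      have hval2 : ((σ' e' : ℤ) : ℚ) = 1 := by
        rw [hcalc, hfst]
        rcases hval (G.snd e') with hc | hc <;>
          rcases sign_cast_cases (G := G) e' with hs | hs <;>
          rw [hc, hs] <;> norm_num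
      exact_mod_cast hval2
    have heneg : σ' e = -1 := by
      have hcalc : ((σ' e : ℤ) : ℚ)
          = 4 * w (G.fst e) * w (G.snd e) * (G.sign e : ℚ) := by
        rw [hσ']
        push_cast
        rw [hεval, hεval]
        push_cast
        ring
      have hval2 : ((σ' e : ℤ) : ℚ) = -1 := by
        rw [hcalc]
        rcases hval (G.snd e) with hc | hc <;>
          rcases sign_cast_cases (G := G) e with hs | hs <;>
          rw [ha, hc, hs] at heq ⊢ <;> norm_num at heq <;> norm_num
      exact_mod_cast hval2
    have hset : {e' | σ' e' = -1} = {e} := by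
      ext e'
      simp only [Set.mem_setOf_eq, Set.mem_singleton_iff]
      constructor
      · intro hm
        by_contra hne
        rw [hone e' hne] at hm
        norm_num at hm
      · rintro rfl
        exact heneg
    rw [hset]
    exact Set.ncard_singleton e

end SignedGraph

end Final
/-- **Bouchet.** A connected signed graph is flow-admissible if and only
if it is not switching-equivalent to a signed graph with exactly one negative edge and
it has no bridge `b` such that `G − b` has a balanced component. -/
theorem stmt_4 {V E : Type} [Fintype V] [Fintype E] (G : SignedGraph V E)
    (hconn : G.Connected) :
    G.FlowAdmissible ↔
      (¬ ∃ σ' : E → ℤ, G.SwitchEquiv σ' ∧ {e | σ' e = -1}.ncard = 1) ∧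
      (¬ ∃ b : E, G.IsBridge b ∧ G.HasBalancedComponentWithout b) := by
  constructor
  · intro hadm
    constructor
    · intro hcon
      exact SignedGraph.not_admissible_of_one_negative G hcon hadm
    · intro hcon
      exact SignedGraph.not_admissible_of_bridge G hconn hcon hadm
  · rintro ⟨h1, h2⟩
    exact SignedGraph.backward_direction G hconn h1 h2
end

section
/- Let (G,σ) be a signed graph and H a subgraph of G. If ⟨H⟩₂ = G, then (G,σ) admits a Z₃-flow φ such that E(G) − E(H) ⊆ supp(φ). -/
namespace SignedGraph

/-- One round of `Φ₂`-operations applied to the edge set `A`: add (the edges of) every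
balanced circuit `C` with `|E(C) − A| ≤ 2`. -/
noncomputable def phi2Step {V E : Type} (G : SignedGraph V E) (A : Set E) : Set E :=
  A ∪ ⋃ (c : Circuit G) (_ : c.IsBalanced ∧ (c.edgeSet \ A).ncard ≤ 2), c.edgeSet

/-- `⟨A⟩₂`: the maximal subgraph obtainable from `A` by repeated `Φ₂`-operations. -/
noncomputable def phi2Closure {V E : Type} (G : SignedGraph V E) (A : Set E) : Set E :=
  ⋃ n : ℕ, (G.phi2Step)^[n] A

end SignedGraph


namespace ZykaAux

/-- Sequence of flow values along a circuit. -/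
def gseq (t s : ℕ → ℤ) : ℕ → ℤ
  | 0 => 1
  | i + 1 => -(t (i + 1) * s i) * gseq t s i

lemma gseq_prod (t s : ℕ → ℤ) (m : ℕ) :
    gseq t s m = ∏ k ∈ Finset.range m, (-(t (k + 1) * s k)) := by
  induction m with
  | zero => simp [gseq]
  | succ k ih => rw [gseq, ih, Finset.prod_range_succ]; ring

lemma gseq_unit (t s : ℕ → ℤ) (ht : ∀ i, t i = 1 ∨ t i = -1)
    (hs : ∀ i, s i = 1 ∨ s i = -1) (m : ℕ) : gseq t s m = 1 ∨ gseq t s m = -1 := by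
  induction m with
  | zero => left; rfl
  | succ k ih =>
    rw [gseq]
    rcases ht (k+1) with h1 | h1 <;> rcases hs k with h2 | h2 <;> rcases ih with h3 | h3 <;>
      simp [h1, h2, h3]

lemma seq_close (t s : ℕ → ℤ) (m : ℕ) :
    t 0 * (s m * gseq t s m) = -(∏ i ∈ Finset.range (m + 1), (-(t i * s i))) := by
  have h1 : ∀ (f : ℕ → ℤ) (j : ℕ), ∏ k ∈ Finset.range j, (-(f k)) =
      (-1) ^ j * ∏ k ∈ Finset.range j, f k := by
    intro f j
    induction j with
    | zero => simp
    | succ k ih => rw [Finset.prod_range_succ, ih, Finset.prod_range_succ, pow_succ]; ring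
  rw [gseq_prod, h1 (fun k => t (k+1) * s k), h1 (fun i => t i * s i),
    Finset.prod_mul_distrib, Finset.prod_mul_distrib, Finset.prod_range_succ',
    Finset.prod_range_succ, pow_succ]
  ring

lemma mod_helper1 (n i : ℕ) (hn : 0 < n) (hi : i < n) : ((i + 1) % n + (n - 1)) % n = i := by
  rcases Nat.lt_or_ge (i + 1) n with h | h
  · rw [Nat.mod_eq_of_lt h]
    have : i + 1 + (n - 1) = i + n := by omega
    rw [this, Nat.add_mod_right, Nat.mod_eq_of_lt hi]
  · have hin : i + 1 = n := by omega
    rw [hin, Nat.mod_self]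
    have : n - 1 < n := by omega
    rw [Nat.zero_add, Nat.mod_eq_of_lt this]; omega

lemma mod_helper2 (n j : ℕ) (hn : 0 < n) (hj : j < n) : ((j + (n - 1)) % n + 1) % n = j := by
  rcases Nat.eq_zero_or_pos j with rfl | hj0
  · have : n - 1 < n := by omega
    rw [Nat.zero_add, Nat.mod_eq_of_lt this]
    have : n - 1 + 1 = n := by omega
    rw [this, Nat.mod_self]
  · have : j + (n - 1) = (j - 1) + n := by omega
    rw [this, Nat.add_mod_right, Nat.mod_eq_of_lt (by omega : j - 1 < n)]
    have : j - 1 + 1 = j := by omega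
    rw [this, Nat.mod_eq_of_lt hj]

end ZykaAux
namespace ZykaAux

open SignedGraph
open scoped Classical

lemma circuitFlow {V E : Type} [Fintype V] [Fintype E] (G : SignedGraph V E)
    (τ : E × Bool → ℤ) (hτ : G.IsOrientation τ) (c : Circuit G)
    (hc : c.IsBalanced) :
    ∃ f : E → ℤ, (∀ i < c.n, f (c.edge i) = 1 ∨ f (c.edge i) = -1) ∧
      (∀ e, e ∉ c.edgeSet → f e = 0) ∧
      ∀ v, ∑ h : E × Bool, (if G.ep h = v then τ h * f h.1 else 0) = 0 := by
  classical
  obtain ⟨hτ1, hτ2⟩ := hτ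
  set n := c.n with hn
  have hnpos := c.n_pos
  set b : ℕ → Bool := fun i =>
    if G.fst (c.edge i) = c.vert i ∧ G.snd (c.edge i) = c.vert ((i + 1) % n)
    then true else false with hbdef
  have hb : ∀ i < n, G.ep (c.edge i, b i) = c.vert i ∧
      G.ep (c.edge i, !(b i)) = c.vert ((i + 1) % n) := by
    intro i hi
    by_cases hcond : G.fst (c.edge i) = c.vert i ∧ G.snd (c.edge i) = c.vert ((i + 1) % n)
    · have hbi : b i = true := by simp [hbdef, hcond]
      rw [hbi]
      simpa [SignedGraph.ep] using hcond
    · have hbi : b i = false := by simp only [hbdef]; exact if_neg hcond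
      rcases c.ends i hi with h | h
      · exact absurd h hcond
      · rw [hbi]
        simpa [SignedGraph.ep] using h
  set t : ℕ → ℤ := fun i => τ (c.edge i, b i) with htdef
  set s : ℕ → ℤ := fun i => τ (c.edge i, !(b i)) with hsdef
  have hts : ∀ i, t i * s i = -G.sign (c.edge i) := by
    intro i
    cases hbi : b i
    · simp only [htdef, hsdef, hbi, Bool.not_false]
      rw [mul_comm]; exact hτ2 (c.edge i)
    · simp only [htdef, hsdef, hbi, Bool.not_true]
      exact hτ2 (c.edge i)
  have ht1 : ∀ i, t i = 1 ∨ t i = -1 := fun i => hτ1 _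
  have hs1 : ∀ i, s i = 1 ∨ s i = -1 := fun i => hτ1 _
  set g := ZykaAux.gseq t s with hgdef
  have hg1 : ∀ m, g m = 1 ∨ g m = -1 := ZykaAux.gseq_unit t s ht1 hs1
  refine ⟨fun e => ∑ i ∈ Finset.range n, if c.edge i = e then g i else 0, ?_, ?_, ?_⟩
  · intro j hj
    have heq : (∑ i ∈ Finset.range n, if c.edge i = c.edge j then g i else 0) = g j := by
      rw [Finset.sum_eq_single_of_mem j (Finset.mem_range.2 hj)]
      · simp
      · intro i hi hne
        rw [if_neg]
        intro heq
        exact hne (c.edge_inj i (Finset.mem_range.1 hi) j hj heq)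
    simp only [heq]
    exact hg1 j
  · intro e he
    apply Finset.sum_eq_zero
    intro i hi
    rw [if_neg]
    exact fun heq => he ⟨i, Finset.mem_range.1 hi, heq⟩
  · intro v
    have step1 : ∀ h : E × Bool,
        (if G.ep h = v then τ h * (∑ i ∈ Finset.range n, if c.edge i = h.1 then g i else 0) else 0)
        = ∑ i ∈ Finset.range n, (if c.edge i = h.1 ∧ G.ep h = v then τ h * g i else 0) := by
      intro h
      split_ifs with hv
      · rw [Finset.mul_sum]
        refine Finset.sum_congr rfl fun i _ => ?_
        by_cases hei : c.edge i = h.1 <;> simp [hei, hv]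
      · symm; apply Finset.sum_eq_zero; intro i _; simp [hv]
    calc ∑ h : E × Bool, (if G.ep h = v then τ h *
            (∑ i ∈ Finset.range n, if c.edge i = h.1 then g i else 0) else 0)
        = ∑ h : E × Bool, ∑ i ∈ Finset.range n,
            (if c.edge i = h.1 ∧ G.ep h = v then τ h * g i else 0) :=
          Finset.sum_congr rfl fun h _ => step1 h
      _ = ∑ i ∈ Finset.range n, ∑ h : E × Bool,
            (if c.edge i = h.1 ∧ G.ep h = v then τ h * g i else 0) := Finset.sum_comm
      _ = ∑ i ∈ Finset.range n, ((if c.vert i = v then t i * g i else 0)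
            + (if c.vert ((i + 1) % n) = v then s i * g i else 0)) := by
          refine Finset.sum_congr rfl fun i hi => ?_
          rw [Fintype.sum_prod_type]
          rw [Finset.sum_eq_single_of_mem (c.edge i) (Finset.mem_univ _)]
          · rw [Fintype.sum_bool]
            obtain ⟨hb1, hb2⟩ := hb i (Finset.mem_range.1 hi)
            have et : t i = τ (c.edge i, b i) := by simp [htdef]
            have es : s i = τ (c.edge i, !(b i)) := by simp [hsdef]
            cases hbi : b i
            · rw [hbi] at hb1 hb2 et es
              simp only [Bool.not_false] at hb2 es
              rw [hb1, hb2, ← et, ← es]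
              simp only [true_and]
              try ring
            · rw [hbi] at hb1 hb2 et es
              simp only [Bool.not_true] at hb2 es
              rw [hb1, hb2, ← et, ← es]
              simp only [true_and]
              try ring
          · intro e' _ hne
            apply Finset.sum_eq_zero
            intro bb _
            rw [if_neg]
            exact fun hh => hne hh.1.symm
      _ = (∑ i ∈ Finset.range n, (if c.vert i = v then t i * g i else 0))
            + ∑ i ∈ Finset.range n, (if c.vert ((i + 1) % n) = v then s i * g i else 0) :=
          Finset.sum_add_distrib
      _ = 0 := ?_
    have hY : (∑ i ∈ Finset.range n, (if c.vert ((i + 1) % n) = v then s i * g i else 0))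
        = ∑ j ∈ Finset.range n, (if c.vert j = v then
            s ((j + (n - 1)) % n) * g ((j + (n - 1)) % n) else 0) := by
      refine Finset.sum_nbij' (fun i => (i + 1) % n) (fun j => (j + (n - 1)) % n) ?_ ?_ ?_ ?_ ?_
      · intro a ha
        exact Finset.mem_range.2 (Nat.mod_lt _ hnpos)
      · intro a ha
        exact Finset.mem_range.2 (Nat.mod_lt _ hnpos)
      · intro a ha
        exact mod_helper1 n a hnpos (Finset.mem_range.1 ha)
      · intro a ha
        exact mod_helper2 n a hnpos (Finset.mem_range.1 ha)
      · intro a ha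
        rw [mod_helper1 n a hnpos (Finset.mem_range.1 ha)]
    rw [hY, ← Finset.sum_add_distrib]
    apply Finset.sum_eq_zero
    intro j hj
    by_cases hv : c.vert j = v
    · rw [if_pos hv, if_pos hv]
      rcases Nat.eq_zero_or_pos j with rfl | hj0
      · -- closing case
        rw [Nat.zero_add, Nat.mod_eq_of_lt (by omega : n - 1 < n)]
        have hK : ∏ i ∈ Finset.range n, (-(t i * s i)) = 1 := by
          have hsg : ∀ i ∈ Finset.range n, -(t i * s i) = G.sign (c.edge i) := by
            intro i _
            rw [hts i]; ring
          rw [Finset.prod_congr rfl hsg]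
          have hset : {i | i < c.n ∧ G.sign (c.edge i) = -1}
              = ↑((Finset.range n).filter fun i => G.sign (c.edge i) = -1) := by
            ext i
            simp [hn]
          have hcard : Even ((Finset.range n).filter
              fun i => G.sign (c.edge i) = -1).card := by
            have hb' := hc
            unfold Circuit.IsBalanced Circuit.negCount at hb'
            rwa [hset, Set.ncard_coe_finset] at hb'
          rw [← Finset.prod_filter_mul_prod_filter_not (Finset.range n)
            (fun i => G.sign (c.edge i) = -1)]
          have h1 : ∏ i ∈ (Finset.range n).filter (fun i => G.sign (c.edge i) = -1),
              G.sign (c.edge i) = (-1) ^ ((Finset.range n).filter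
                (fun i => G.sign (c.edge i) = -1)).card := by
            rw [Finset.prod_congr rfl (fun i hi => (Finset.mem_filter.1 hi).2),
              Finset.prod_const]
          have h2 : ∏ i ∈ (Finset.range n).filter (fun i => ¬ G.sign (c.edge i) = -1),
              G.sign (c.edge i) = 1 := by
            apply Finset.prod_eq_one
            intro i hi
            rcases G.sign_unit (c.edge i) with h | h
            · exact h
            · exact absurd h (Finset.mem_filter.1 hi).2
          rw [h1, h2, mul_one, Even.neg_one_pow hcard]
        have hkey := ZykaAux.seq_close t s (n - 1)
        rw [(by omega : n - 1 + 1 = n), hK, ← hgdef] at hkey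
        have hg0 : g 0 = 1 := rfl
        rw [hg0, mul_one]
        rcases ht1 0 with h | h <;> rw [h] at hkey ⊢ <;> linarith
      · obtain ⟨k, rfl⟩ : ∃ k, j = k + 1 := ⟨j - 1, by omega⟩
        have hjn := Finset.mem_range.1 hj
        have hp : (k + 1 + (n - 1)) % n = k := by
          rw [(by omega : k + 1 + (n - 1) = k + n), Nat.add_mod_right,
            Nat.mod_eq_of_lt (by omega : k < n)]
        rw [hp]
        have hgj : g (k + 1) = -(t (k + 1) * s k) * g k := by rw [hgdef]; rfl
        rw [hgj]
        rcases ht1 (k + 1) with h | h <;> rw [h] <;> ring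
    · rw [if_neg hv, if_neg hv, add_zero]

end ZykaAux
namespace ZykaAux

open SignedGraph Set
open scoped Classical

variable {V E : Type} [Fintype V] [Fintype E]

lemma step_mono (G : SignedGraph V E) {A B : Set E} (hAB : A ⊆ B) :
    G.phi2Step A ⊆ G.phi2Step B := by
  unfold phi2Step
  apply Set.union_subset_union hAB
  intro x hx
  simp only [Set.mem_iUnion] at hx ⊢
  obtain ⟨c, ⟨hbal, hcard⟩, hx⟩ := hx
  refine ⟨c, ⟨hbal, ?_⟩, hx⟩
  exact le_trans (Set.ncard_le_ncard (Set.diff_subset_diff_right hAB) (Set.toFinite _)) hcard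

lemma closure_mono (G : SignedGraph V E) {A B : Set E} (hAB : A ⊆ B) :
    G.phi2Closure A ⊆ G.phi2Closure B := by
  unfold phi2Closure
  apply Set.iUnion_mono
  intro n
  induction n with
  | zero => exact hAB
  | succ k ih =>
    rw [Function.iterate_succ_apply', Function.iterate_succ_apply']
    exact step_mono G ih

lemma exists_circ (G : SignedGraph V E) {A : Set E} (hcl : G.phi2Closure A = Set.univ)
    (hne : A ≠ Set.univ) :
    ∃ c : Circuit G, c.IsBalanced ∧ (c.edgeSet \ A).ncard ≤ 2 ∧ ¬ c.edgeSet ⊆ A := by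
  by_contra h'
  push_neg at h'
  have hstep : G.phi2Step A = A := by
    apply Set.Subset.antisymm
    · apply Set.union_subset Set.Subset.rfl
      apply Set.iUnion_subset
      intro c
      apply Set.iUnion_subset
      intro hcond
      exact h' c hcond.1 hcond.2
    · exact Set.subset_union_left
  have hiter : ∀ k, (G.phi2Step)^[k] A = A := by
    intro k
    induction k with
    | zero => rfl
    | succ m ih => rw [Function.iterate_succ_apply', ih, hstep]
  have : G.phi2Closure A = A := by
    unfold phi2Closure
    rw [Set.iUnion_congr hiter, Set.iUnion_const]
  exact hne (this ▸ hcl)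

lemma main_induction (G : SignedGraph V E) (τ : E × Bool → ℤ) (hτ : G.IsOrientation τ) :
    ∀ (k : ℕ) (A : Set E), (Aᶜ).ncard ≤ k → G.phi2Closure A = Set.univ →
    ∃ g : E → ZMod 3,
      (∀ v, ∑ h : E × Bool, (if G.ep h = v then (τ h : ZMod 3) * g h.1 else 0) = 0) ∧
      ∀ e, e ∉ A → g e ≠ 0 := by
  haveI : Fact (Nat.Prime 3) := ⟨by norm_num⟩
  intro k
  induction k with
  | zero =>
    intro A hA hcl
    have hAc : Aᶜ = ∅ := (Set.ncard_eq_zero (Set.toFinite _)).1 (Nat.le_zero.1 hA)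
    have hAu : A = Set.univ := by rwa [Set.compl_empty_iff] at hAc
    exact ⟨0, fun v => by simp, fun e he => absurd (hAu ▸ Set.mem_univ e) he⟩
  | succ k ih =>
    intro A hA hcl
    by_cases hAu : A = Set.univ
    · exact ⟨0, fun v => by simp, fun e he => absurd (hAu ▸ Set.mem_univ e) he⟩
    obtain ⟨c, hbal, hcard, hnsub⟩ := exists_circ G hcl hAu
    obtain ⟨e0, he0c, he0A⟩ := Set.not_subset.1 hnsub
    set A' := A ∪ c.edgeSet with hA'def
    have hclA' : G.phi2Closure A' = Set.univ := by
      apply Set.eq_univ_of_univ_subset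
      rw [← hcl]
      exact closure_mono G Set.subset_union_left
    have hlt : (A'ᶜ).ncard < (Aᶜ).ncard := by
      apply Set.ncard_lt_ncard _ (Set.toFinite _)
      constructor
      · exact Set.compl_subset_compl.2 Set.subset_union_left
      · intro hsub
        exact (hsub he0A) (Or.inr he0c)
    obtain ⟨g', hg'flow, hg'⟩ := ih A' (by omega) hclA'
    obtain ⟨f, hf1, hf0, hfflow⟩ := circuitFlow G τ hτ c hbal
    set fc : E → ZMod 3 := fun e => ((f e : ℤ) : ZMod 3) with hfcdef
    have hfcflow : ∀ v,
        ∑ h : E × Bool, (if G.ep h = v then (τ h : ZMod 3) * fc h.1 else 0) = 0 := by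
      intro v
      have := hfflow v
      have hcast : ((∑ h : E × Bool, (if G.ep h = v then τ h * f h.1 else 0) : ℤ) : ZMod 3)
          = ∑ h : E × Bool, (if G.ep h = v then (τ h : ZMod 3) * fc h.1 else 0) := by
        push_cast
        refine Finset.sum_congr rfl fun h _ => ?_
        split_ifs <;> simp [hfcdef]
      rw [← hcast, this]
      simp
    set B : Set (ZMod 3) := (fun e => -g' e * (fc e)⁻¹) '' (c.edgeSet \ A) with hBdef
    have hBcard : B.ncard ≤ 2 :=
      le_trans (Set.ncard_image_le (Set.toFinite _)) hcard
    obtain ⟨lam, hlam⟩ : ∃ lam : ZMod 3, lam ∉ B := by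
      by_contra hcon
      push_neg at hcon
      have hBu : B = Set.univ := Set.eq_univ_of_forall hcon
      rw [hBu, Set.ncard_univ] at hBcard
      simp [Nat.card_eq_fintype_card] at hBcard
    refine ⟨fun e => g' e + lam * fc e, ?_, ?_⟩
    · intro v
      have h1 := hg'flow v
      have h2 := hfcflow v
      have : ∑ h : E × Bool,
          (if G.ep h = v then (τ h : ZMod 3) * (g' h.1 + lam * fc h.1) else 0)
          = (∑ h : E × Bool, (if G.ep h = v then (τ h : ZMod 3) * g' h.1 else 0))
            + lam * ∑ h : E × Bool, (if G.ep h = v then (τ h : ZMod 3) * fc h.1 else 0) := by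
        rw [Finset.mul_sum, ← Finset.sum_add_distrib]
        refine Finset.sum_congr rfl fun h _ => ?_
        split_ifs
        · ring
        · simp
      rw [this, h1, h2]
      ring
    · intro e heA
      by_cases hec : e ∈ c.edgeSet
      · have hfc0 : fc e ≠ 0 := by
          obtain ⟨i, hi, rfl⟩ := hec
          rcases hf1 i hi with h | h <;> simp [hfcdef, h]
        intro h0
        apply hlam
        refine ⟨e, ⟨hec, heA⟩, ?_⟩
        have hlf : lam * fc e = -g' e := by linear_combination h0
        have := congrArg (· * (fc e)⁻¹) hlf
        simp only [mul_assoc, mul_inv_cancel₀ hfc0, mul_one] at this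
        show -g' e * (fc e)⁻¹ = lam
        exact this.symm
      · have hfcz : fc e = 0 := by simp [hfcdef, hf0 e hec]
        have heA' : e ∉ A' := fun h => h.elim heA hec
        have := hg' e heA'
        simpa [hfcz] using this

end ZykaAux
/-- **Zýka.** Let `(G,σ)` be a signed graph and `H` a subgraph (given by
its edge set). If `⟨H⟩₂ = G`, then `(G,σ)` admits a `ℤ₃`-flow `φ` with
`E(G) − E(H) ⊆ supp φ`. -/
theorem stmt_5 {V E : Type} [Fintype V] [Fintype E] (G : SignedGraph V E) (H : Set E)
    (hcl : G.phi2Closure H = Set.univ) :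
    ∃ τ φ, G.IsZFlow 3 τ φ ∧ Hᶜ ⊆ G.supp φ := by
  classical
  set τ : E × Bool → ℤ := fun h => if h.2 then 1 else -G.sign h.1 with hτdef
  have hτ : G.IsOrientation τ := by
    constructor
    · intro h
      simp only [hτdef]
      split_ifs
      · left; rfl
      · rcases G.sign_unit h.1 with hs | hs <;> rw [hs]
        · right; rfl
        · left; rfl
    · intro e
      simp [hτdef]
  obtain ⟨g, hgflow, hg⟩ := ZykaAux.main_induction G τ hτ (Hᶜ).ncard H le_rfl hcl
  set φ : E → ℤ := fun e => if g e = 0 then 0 else if g e = 1 then 1 else -1 with hφdef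
  have hcast : ∀ e, ((φ e : ℤ) : ZMod 3) = g e := by
    intro e
    have hx : ∀ x : ZMod 3, x = 0 ∨ x = 1 ∨ x = 2 := by decide
    simp only [hφdef]
    rcases hx (g e) with h | h | h <;> rw [h] <;> norm_num
    decide
  refine ⟨τ, φ, ⟨hτ, ?_, ?_⟩, ?_⟩
  · intro e
    simp only [hφdef]
    split_ifs <;> norm_num
  · intro v
    have hbd : G.boundary τ φ v
        = ∑ h : E × Bool, (if G.ep h = v then τ h * φ h.1 else 0) := by
      unfold SignedGraph.boundary
      rw [show {h : E × Bool | G.ep h = v}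
          = ↑(Finset.univ.filter fun h : E × Bool => G.ep h = v) by ext h; simp]
      rw [finsum_mem_coe_finset, Finset.sum_filter]
    rw [hbd]
    have hz : ((∑ h : E × Bool, (if G.ep h = v then τ h * φ h.1 else 0) : ℤ) : ZMod 3)
        = 0 := by
      push_cast
      have heq : (∑ h : E × Bool, if G.ep h = v then ((τ h : ZMod 3) * (φ h.1 : ZMod 3)) else 0)
          = ∑ h : E × Bool, (if G.ep h = v then (τ h : ZMod 3) * g h.1 else 0) := by
        refine Finset.sum_congr rfl fun h _ => ?_
        split_ifs
        · rw [hcast]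
        · rfl
      rw [heq]
      exact hgflow v
    have := (ZMod.intCast_zmod_eq_zero_iff_dvd _ 3).1 hz
    exact_mod_cast this
  · intro e he
    have hge := hg e he
    show φ e ≠ 0
    simp only [hφdef]
    split_ifs with h1 h2
    · exact absurd h1 hge
    · norm_num
    · norm_num
end

section
/- Let (G,σ) be a connected signed graph. If (G,σ) admits a Z₂-flow f₁ such that supp(f₁) contains an even number of odd components, then (G,σ) admits a 3-flow f₂ such that supp(f₁) = E_{f₂=±1} and supp(f₂) − supp(f₁) induces an acyclic subgraph. -/
open scoped Classical

namespace TrailTheory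

variable {V α : Type}

noncomputable def deg (p q : α → V) (M : Multiset α) (v : V) : ℕ :=
  (M.filter (fun x => p x = v)).card + (M.filter (fun x => q x = v)).card

inductive Trail (p q : α → V) : V → V → Multiset α → Prop
  | nil (a : V) : Trail p q a a 0
  | consf (x : α) {c : V} {M : Multiset α} : Trail p q (q x) c M → Trail p q (p x) c (x ::ₘ M)
  | consr (x : α) {c : V} {M : Multiset α} : Trail p q (p x) c M → Trail p q (q x) c (x ::ₘ M)

variable {p q : α → V}

lemma deg_zero (v : V) : deg p q 0 v = 0 := by simp [deg]

lemma deg_cons (x : α) (M : Multiset α) (v : V) :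
    deg p q (x ::ₘ M) v
      = deg p q M v + ((if p x = v then 1 else 0) + (if q x = v then 1 else 0)) := by
  simp only [deg, Multiset.filter_cons]
  split <;> split <;> simp <;> ring

lemma deg_add (M N : Multiset α) (v : V) :
    deg p q (M + N) v = deg p q M v + deg p q N v := by
  simp only [deg, Multiset.filter_add, Multiset.card_add]; ring

lemma deg_le_of_le {M N : Multiset α} (h : M ≤ N) (v : V) : deg p q M v ≤ deg p q N v := by
  have h1 := Multiset.card_le_card (Multiset.filter_le_filter (fun x => p x = v) h)
  have h2 := Multiset.card_le_card (Multiset.filter_le_filter (fun x => q x = v) h)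
  exact Nat.add_le_add h1 h2

lemma deg_sub {M N : Multiset α} (h : N ≤ M) (v : V) :
    deg p q (M - N) v = deg p q M v - deg p q N v := by
  have hM : M = (M - N) + N := (tsub_add_cancel_of_le h).symm
  have h' := deg_add (p := p) (q := q) (M - N) N v
  rw [← hM] at h'
  omega

lemma exists_of_deg_pos {M : Multiset α} {v : V} (h : 0 < deg p q M v) :
    ∃ x ∈ M, p x = v ∨ q x = v := by
  by_contra hc
  push_neg at hc
  have h1 : (M.filter (fun x => p x = v)) = 0 := by
    rw [Multiset.filter_eq_nil]
    intro x hx hpx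
    exact (hc x hx).1 hpx
  have h2 : (M.filter (fun x => q x = v)) = 0 := by
    rw [Multiset.filter_eq_nil]
    intro x hx hpx
    exact (hc x hx).2 hpx
  simp [deg, h1, h2] at h

lemma trail_parity {a b : V} {M : Multiset α} (h : Trail p q a b M) (v : V) :
    (deg p q M v : ZMod 2) = (if a = v then 1 else 0) + (if b = v then 1 else 0) := by
  induction h with
  | nil w =>
      rw [deg_zero]
      push_cast
      split_ifs <;> decide
  | consf x h ih =>
      rw [deg_cons]
      push_cast
      rw [ih]
      split_ifs <;> decide
  | consr x h ih =>
      rw [deg_cons]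
      push_cast
      rw [ih]
      split_ifs <;> decide

lemma trail_concat {a b c : V} {M N : Multiset α} (h1 : Trail p q a b M)
    (h2 : Trail p q b c N) : Trail p q a c (M + N) := by
  induction h1 with
  | nil w => simpa using h2
  | consf x h ih => rw [Multiset.cons_add]; exact Trail.consf x (ih h2)
  | consr x h ih => rw [Multiset.cons_add]; exact Trail.consr x (ih h2)

lemma trail_splice {a c v : V} {M P : Multiset α} (h1 : Trail p q a c M)
    (h2 : Trail p q v v P) (hv : v = a ∨ ∃ x ∈ M, p x = v ∨ q x = v) :
    Trail p q a c (M + P) := by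
  induction h1 with
  | nil w =>
      rcases hv with rfl | ⟨x, hx, _⟩
      · simpa using h2
      · simp at hx
  | @consf x b M h ih =>
      rcases hv with rfl | ⟨y, hy, hyv⟩
      · have := trail_concat h2 (Trail.consf x h)
        rwa [add_comm]
      · rcases Multiset.mem_cons.mp hy with rfl | hyM
        · rcases hyv with hpv | hqv
          · subst hpv
            have := trail_concat h2 (Trail.consf y h)
            rwa [add_comm]
          · subst hqv
            rw [Multiset.cons_add]
            exact Trail.consf y (ih (Or.inl rfl))
        · rw [Multiset.cons_add]
          exact Trail.consf x (ih (Or.inr ⟨y, hyM, hyv⟩))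
  | @consr x b M h ih =>
      rcases hv with rfl | ⟨y, hy, hyv⟩
      · have := trail_concat h2 (Trail.consr x h)
        rwa [add_comm]
      · rcases Multiset.mem_cons.mp hy with rfl | hyM
        · rcases hyv with hpv | hqv
          · subst hpv
            rw [Multiset.cons_add]
            exact Trail.consr y (ih (Or.inl rfl))
          · subst hqv
            have := trail_concat h2 (Trail.consr y h)
            rwa [add_comm]
        · rw [Multiset.cons_add]
          exact Trail.consr x (ih (Or.inr ⟨y, hyM, hyv⟩))

/-- greedy trail extraction: from any start, extract a trail which exhausts the degree
at its endpoint. -/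
lemma exists_maximal_trail : ∀ (n : ℕ) (M : Multiset α), M.card ≤ n → ∀ (a : V),
    ∃ M₁ ≤ M, ∃ c, Trail p q a c M₁ ∧ deg p q (M - M₁) c = 0 := by
  intro n
  induction n with
  | zero =>
      intro M hM a
      have : M = 0 := by simpa using Multiset.card_eq_zero.mp (Nat.le_zero.mp hM)
      subst this
      exact ⟨0, le_rfl, a, Trail.nil a, by simp [deg_zero]⟩
  | succ n ih =>
      intro M hM a
      by_cases hd : deg p q M a = 0
      · exact ⟨0, zero_le, a, Trail.nil a, by simpa using hd⟩
      · obtain ⟨x, hxM, hx⟩ := exists_of_deg_pos (Nat.pos_of_ne_zero hd)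
        have hpos : 0 < M.card := Multiset.card_pos_iff_exists_mem.mpr ⟨x, hxM⟩
        have hcard : (M.erase x).card ≤ n := by
          rw [Multiset.card_erase_of_mem hxM, Nat.pred_eq_sub_one]
          omega
        rcases hx with hpx | hqx
        · obtain ⟨M₁, hle, c, htr, hdeg⟩ := ih (M.erase x) hcard (q x)
          refine ⟨x ::ₘ M₁, ?_, c, ?_, ?_⟩
          · rw [← Multiset.cons_erase hxM]
            exact Multiset.cons_le_cons x hle
          · subst hpx; exact Trail.consf x htr
          · rwa [Multiset.sub_cons]
        · obtain ⟨M₁, hle, c, htr, hdeg⟩ := ih (M.erase x) hcard (p x)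
          refine ⟨x ::ₘ M₁, ?_, c, ?_, ?_⟩
          · rw [← Multiset.cons_erase hxM]
            exact Multiset.cons_le_cons x hle
          · subst hqx; exact Trail.consr x htr
          · rwa [Multiset.sub_cons]


lemma even_deg_of_closed {v : V} {M : Multiset α} (h : Trail p q v v M) (u : V) :
    Even (deg p q M u) := by
  have hp := trail_parity h u
  have : ((deg p q M u : ℕ) : ZMod 2) = 0 := by
    rw [hp]; split_ifs <;> decide
  rw [ZMod.natCast_eq_zero_iff] at this
  exact Nat.even_iff.mpr (by omega)

def step (p q : α → V) (R : Multiset α) (u u' : V) : Prop :=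
  ∃ x ∈ R, (p x = u ∧ q x = u') ∨ (p x = u' ∧ q x = u)

lemma crossing {r : V → V → Prop} {S : Set V} {w u : V}
    (h : Relation.ReflTransGen r w u) (hw : w ∈ S) (hu : u ∉ S) :
    ∃ a b, r a b ∧ a ∈ S ∧ b ∉ S := by
  induction h with
  | refl => exact absurd hw hu
  | tail hab hr ih =>
      rename_i b c
      by_cases hb : b ∈ S
      · exact ⟨b, c, hr, hb, hu⟩
      · exact ih hb

lemma hierholzer : ∀ (n : ℕ) (M N : Multiset α) (w : V), M.card ≤ n →
    (∀ v, Even (deg p q M v)) → Trail p q w w N →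
    (∀ x ∈ M, Relation.ReflTransGen (step p q (M + N)) w (p x)) →
    Trail p q w w (N + M) := by
  intro n
  induction n with
  | zero =>
      intro M N w hM _ hN _
      have : M = 0 := Multiset.card_eq_zero.mp (Nat.le_zero.mp hM)
      subst this
      simpa using hN
  | succ n ih =>
      intro M N w hM heven hN hreach
      by_cases hM0 : M = 0
      · subst hM0; simpa using hN
      -- find a vertex v on N (or w) with positive degree in M
      obtain ⟨x₀, hx₀⟩ := Multiset.exists_mem_of_ne_zero hM0
      set S : Set V := {v | v = w ∨ ∃ y ∈ N, p y = v ∨ q y = v} with hS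
      have hwS : w ∈ S := Or.inl rfl
      have degpos : ∀ z ∈ M, ∀ u : V, p z = u ∨ q z = u → 0 < deg p q M u := by
        intro z hz u hu
        rcases hu with h | h
        · have : z ∈ M.filter (fun x => p x = u) := Multiset.mem_filter.mpr ⟨hz, h⟩
          have := Multiset.card_pos_iff_exists_mem.mpr ⟨z, this⟩
          unfold deg; omega
        · have : z ∈ M.filter (fun x => q x = u) := Multiset.mem_filter.mpr ⟨hz, h⟩
          have := Multiset.card_pos_iff_exists_mem.mpr ⟨z, this⟩
          unfold deg; omega
      obtain ⟨v, hvS, hvdeg⟩ : ∃ v, v ∈ S ∧ 0 < deg p q M v := by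
        by_cases hpS : p x₀ ∈ S
        · exact ⟨p x₀, hpS, degpos x₀ hx₀ _ (Or.inl rfl)⟩
        · obtain ⟨a, b, hab, haS, hbS⟩ := crossing (hreach x₀ hx₀) hwS hpS
          obtain ⟨z, hz, hzab⟩ := hab
          rcases Multiset.mem_add.mp hz with hzM | hzN
          · refine ⟨a, haS, degpos z hzM a ?_⟩
            rcases hzab with ⟨h1, _⟩ | ⟨_, h2⟩
            · exact Or.inl h1
            · exact Or.inr h2
          · exfalso
            apply hbS
            rcases hzab with ⟨_, h2⟩ | ⟨h1, _⟩
            · exact Or.inr ⟨z, hzN, Or.inr h2⟩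
            · exact Or.inr ⟨z, hzN, Or.inl h1⟩
      obtain ⟨M₁, hle, c, htr, hdeg⟩ := exists_maximal_trail (p := p) (q := q) M.card M le_rfl v
      have hMsplit : deg p q M c = deg p q M₁ c + deg p q (M - M₁) c := by
        have := deg_sub (p := p) (q := q) hle c
        have := deg_le_of_le (p := p) (q := q) hle c
        omega
      have hcv : c = v := by
        by_contra hne
        have hpar := trail_parity htr c
        have h1 : ((deg p q M₁ c : ℕ) : ZMod 2) = 1 := by
          rw [hpar]
          have : ¬ (v = c) := fun h => hne h.symm
          simp [this]
        have h2 : ((deg p q M c : ℕ) : ZMod 2) = 0 := by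
          rw [ZMod.natCast_eq_zero_iff]
          obtain ⟨k, hk⟩ := heven c
          exact ⟨k, by omega⟩
        rw [hMsplit, hdeg] at h2
        simp only [Nat.add_zero] at h2
        rw [h1] at h2
        exact one_ne_zero h2
      subst hcv
      have hM₁0 : M₁ ≠ 0 := by
        intro h0
        subst h0
        rw [Multiset.sub_zero] at hdeg
        omega
      -- splice M₁ into N
      have hsplice : Trail p q w w (N + M₁) := by
        apply trail_splice hN htr
        rcases hvS with h | ⟨y, hy, hyv⟩
        · exact Or.inl h
        · exact Or.inr ⟨y, hy, hyv⟩
      -- recurse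
      have hcard1 : 0 < M₁.card := Multiset.card_pos.mpr hM₁0
      have hcard : (M - M₁).card ≤ n := by
        rw [Multiset.card_sub hle]
        have := Multiset.card_le_card hle
        omega
      have heven' : ∀ u, Even (deg p q (M - M₁) u) := by
        intro u
        rw [deg_sub hle]
        exact (heven u).tsub (even_deg_of_closed htr u)
      have htot : (M - M₁) + (N + M₁) = M + N := by
        rw [add_comm N M₁, ← add_assoc, tsub_add_cancel_of_le hle]
      have hreach' : ∀ x ∈ M - M₁,
          Relation.ReflTransGen (step p q ((M - M₁) + (N + M₁))) w (p x) := by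
        intro x hx
        rw [htot]
        exact hreach x (Multiset.mem_of_le (Multiset.sub_le_self M M₁) hx)
      have := ih (M - M₁) (N + M₁) w hcard heven' hsplice hreach'
      rwa [add_assoc, add_comm M₁ (M - M₁), tsub_add_cancel_of_le hle] at this


section Flow

variable [Fintype α] (κ₁ κ₂ σ : α → ℤ)

noncomputable def Bd (p q : α → V) (f : α → ℤ) (v : V) : ℤ :=
  ∑ x : α, ((if p x = v then κ₁ x * f x else 0) + (if q x = v then κ₂ x * f x else 0))

lemma Bd_zero (v : V) : Bd κ₁ κ₂ p q (fun _ => 0) v = 0 := by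
  simp [Bd]

lemma Bd_update (f : α → ℤ) (x : α) (c : ℤ) (hfx : f x = 0) (v : V) :
    Bd κ₁ κ₂ p q (Function.update f x c) v
      = Bd κ₁ κ₂ p q f v
        + ((if p x = v then κ₁ x * c else 0) + (if q x = v then κ₂ x * c else 0)) := by
  unfold Bd
  have key : ∀ y : α,
      ((if p y = v then κ₁ y * (Function.update f x c y) else 0)
        + (if q y = v then κ₂ y * (Function.update f x c y) else 0))
      = ((if p y = v then κ₁ y * f y else 0) + (if q y = v then κ₂ y * f y else 0))
        + (if y = x then ((if p x = v then κ₁ x * c else 0)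
            + (if q x = v then κ₂ x * c else 0)) else 0) := by
    intro y
    by_cases hyx : y = x
    · subst hyx
      simp [Function.update_self, hfx]
    · simp [Function.update_of_ne hyx, hyx]
  rw [Finset.sum_congr rfl (fun y _ => key y), Finset.sum_add_distrib,
    Finset.sum_ite_eq' Finset.univ x]
  simp

lemma trail_flow (hκ₁ : ∀ x, κ₁ x = 1 ∨ κ₁ x = -1) (hκ₂ : ∀ x, κ₂ x = 1 ∨ κ₂ x = -1)
    (hσ : ∀ x, κ₁ x * κ₂ x = - σ x) :
    ∀ {a b : V} {M : Multiset α}, Trail p q a b M → M.Nodup →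
    ∀ s : ℤ, s = 1 ∨ s = -1 →
    ∃ f : α → ℤ, (∀ x, x ∉ M → f x = 0) ∧ (∀ x ∈ M, f x = 1 ∨ f x = -1) ∧
      ∀ v, Bd κ₁ κ₂ p q f v
        = (if a = v then s else 0) - (if b = v then s * (M.map σ).prod else 0) := by
  intro a b M h
  induction h with
  | nil w =>
      intro _ s _
      exact ⟨fun _ => 0, fun _ _ => rfl, fun x hx => absurd hx (Multiset.notMem_zero x),
        fun v => by rw [Bd_zero]; simp⟩
  | @consf x c M h ih =>
      intro hnd s hs
      obtain ⟨hxM, hndM⟩ := Multiset.nodup_cons.mp hnd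
      have hσx : σ x = 1 ∨ σ x = -1 := by
        have := hσ x
        rcases hκ₁ x with h1 | h1 <;> rcases hκ₂ x with h2 | h2 <;>
          rw [h1, h2] at this <;> [right; left; left; right] <;> linarith
      have hs' : σ x * s = 1 ∨ σ x * s = -1 := by
        rcases hσx with h1 | h1 <;> rcases hs with h2 | h2 <;> rw [h1, h2] <;> norm_num
      obtain ⟨f, hf0, hf1, hfB⟩ := ih hndM (σ x * s) hs'
      refine ⟨Function.update f x (s * κ₁ x), ?_, ?_, ?_⟩
      · intro y hy
        rw [Multiset.mem_cons, not_or] at hy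
        rw [Function.update_of_ne hy.1]
        exact hf0 y hy.2
      · intro y hy
        rcases Multiset.mem_cons.mp hy with rfl | hyM
        · rw [Function.update_self]
          rcases hκ₁ y with h1 | h1 <;> rcases hs with h2 | h2 <;> rw [h1, h2] <;> norm_num
        · rw [Function.update_of_ne (fun hyx => hxM (by rwa [hyx] at hyM))]
          exact hf1 y hyM
      · intro v
        rw [Bd_update κ₁ κ₂ f x _ (hf0 x hxM) v, hfB v]
        have e1 : κ₁ x * (s * κ₁ x) = s := by
          rcases hκ₁ x with h1 | h1 <;> rw [h1] <;> ring
        have e2 : κ₂ x * (s * κ₁ x) = -(σ x * s) := by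
          linear_combination s * hσ x
        rw [e1, e2, Multiset.map_cons, Multiset.prod_cons]
        split_ifs <;> ring
  | @consr x c M h ih =>
      intro hnd s hs
      obtain ⟨hxM, hndM⟩ := Multiset.nodup_cons.mp hnd
      have hσx : σ x = 1 ∨ σ x = -1 := by
        have := hσ x
        rcases hκ₁ x with h1 | h1 <;> rcases hκ₂ x with h2 | h2 <;>
          rw [h1, h2] at this <;> [right; left; left; right] <;> linarith
      have hs' : σ x * s = 1 ∨ σ x * s = -1 := by
        rcases hσx with h1 | h1 <;> rcases hs with h2 | h2 <;> rw [h1, h2] <;> norm_num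
      obtain ⟨f, hf0, hf1, hfB⟩ := ih hndM (σ x * s) hs'
      refine ⟨Function.update f x (s * κ₂ x), ?_, ?_, ?_⟩
      · intro y hy
        rw [Multiset.mem_cons, not_or] at hy
        rw [Function.update_of_ne hy.1]
        exact hf0 y hy.2
      · intro y hy
        rcases Multiset.mem_cons.mp hy with rfl | hyM
        · rw [Function.update_self]
          rcases hκ₂ y with h1 | h1 <;> rcases hs with h2 | h2 <;> rw [h1, h2] <;> norm_num
        · rw [Function.update_of_ne (fun hyx => hxM (by rwa [hyx] at hyM))]
          exact hf1 y hyM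
      · intro v
        rw [Bd_update κ₁ κ₂ f x _ (hf0 x hxM) v, hfB v]
        have e1 : κ₂ x * (s * κ₂ x) = s := by
          rcases hκ₂ x with h1 | h1 <;> rw [h1] <;> ring
        have e2 : κ₁ x * (s * κ₂ x) = -(σ x * s) := by
          linear_combination s * hσ x
        rw [e1, e2, Multiset.map_cons, Multiset.prod_cons]
        split_ifs <;> ring

lemma closed_trail_flow (hκ₁ : ∀ x, κ₁ x = 1 ∨ κ₁ x = -1)
    (hκ₂ : ∀ x, κ₂ x = 1 ∨ κ₂ x = -1) (hσ : ∀ x, κ₁ x * κ₂ x = - σ x)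
    {w : V} {M : Multiset α} (h : Trail p q w w M) (hnd : M.Nodup)
    (hprod : (M.map σ).prod = 1) :
    ∃ f : α → ℤ, (∀ x, x ∉ M → f x = 0) ∧ (∀ x ∈ M, f x = 1 ∨ f x = -1) ∧
      ∀ v, Bd κ₁ κ₂ p q f v = 0 := by
  obtain ⟨f, h0, h1, hB⟩ := trail_flow κ₁ κ₂ σ hκ₁ hκ₂ hσ h hnd 1 (Or.inl rfl)
  refine ⟨f, h0, h1, fun v => ?_⟩
  rw [hB v, hprod]
  split_ifs <;> ring

end Flow

end TrailTheory

namespace SignedGraph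

open scoped Classical

variable {V E : Type} {G : SignedGraph V E}

lemma adjIn_symm {A : Set E} {u v : V} (h : G.adjIn A u v) : G.adjIn A v u := by
  obtain ⟨e, he, h1 | h2⟩ := h
  · exact ⟨e, he, Or.inr h1⟩
  · exact ⟨e, he, Or.inl h2⟩

lemma reachIn_symm {A : Set E} {u v : V} (h : G.reachIn A u v) : G.reachIn A v u :=
  by
    haveI : Std.Symm (G.adjIn A) := ⟨fun _ _ hh => adjIn_symm hh⟩
    exact Std.Symm.symm (r := Relation.ReflTransGen (G.adjIn A)) _ _ h

lemma edge_zero_mem (c : Circuit G) : c.edge 0 ∈ c.edgeSet := ⟨0, c.n_pos, rfl⟩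

lemma acyclic_anti {A B : Set E} (h : G.Acyclic B) (hAB : A ⊆ B) : G.Acyclic A :=
  fun c hc => h c (fun e he => hAB (hc he))

lemma acyclic_empty : G.Acyclic (∅ : Set E) := by
  intro c hc
  exact (hc (edge_zero_mem c)).elim

/-- the long way around a circuit, avoiding edge 0 -/
lemma circuit_detour {T : Set E} (c : Circuit G) (hc : c.edgeSet ⊆ T) :
    G.reachIn (T \ {c.edge 0}) (c.vert (1 % c.n)) (c.vert 0) := by
  have key : ∀ k, 1 ≤ k → k ≤ c.n →
      G.reachIn (T \ {c.edge 0}) (c.vert (1 % c.n)) (c.vert (k % c.n)) := by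
    intro k
    induction k with
    | zero => omega
    | succ k ih =>
        intro _ hk1
        by_cases hk0 : k = 0
        · subst hk0
          exact Relation.ReflTransGen.refl
        · have hk : 1 ≤ k := Nat.one_le_iff_ne_zero.mpr hk0
          have hkn : k < c.n := hk1
          have step : G.adjIn (T \ {c.edge 0}) (c.vert k) (c.vert ((k + 1) % c.n)) := by
            refine ⟨c.edge k, ⟨hc ⟨k, hkn, rfl⟩, ?_⟩, ?_⟩
            · intro heq
              have := c.edge_inj k hkn 0 c.n_pos heq
              omega
            · rcases c.ends k hkn with ⟨h1, h2⟩ | ⟨h1, h2⟩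
              · exact Or.inl ⟨h1, h2⟩
              · exact Or.inr ⟨h2, h1⟩
          have ihk := ih hk (le_of_lt hkn)
          rw [Nat.mod_eq_of_lt hkn] at ihk
          exact Relation.ReflTransGen.tail ihk step
  have := key c.n c.n_pos le_rfl
  rwa [Nat.mod_self] at this

lemma reach_detour {T : Set E} (c : Circuit G) (hc : c.edgeSet ⊆ T) {u v : V}
    (h : G.reachIn T u v) : G.reachIn (T \ {c.edge 0}) u v := by
  induction h with
  | refl => exact Relation.ReflTransGen.refl
  | tail hab hstep ih =>
      rename_i b d
      obtain ⟨e, heT, hends⟩ := hstep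
      by_cases he0 : e = c.edge 0
      · subst he0
        have hrd : G.reachIn (T \ {c.edge 0}) (G.fst (c.edge 0)) (G.snd (c.edge 0)) := by
          rcases c.ends 0 c.n_pos with ⟨h1, h2⟩ | ⟨h1, h2⟩
          · rw [h1, h2]
            exact reachIn_symm (circuit_detour c hc)
          · rw [h1, h2]
            exact circuit_detour c hc
        rcases hends with ⟨h1, h2⟩ | ⟨h1, h2⟩
        · exact Relation.ReflTransGen.trans ih (h1 ▸ h2 ▸ hrd)
        · exact Relation.ReflTransGen.trans ih (reachIn_symm (h2 ▸ h1 ▸ hrd))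
      · exact Relation.ReflTransGen.tail ih ⟨e, ⟨heT, he0⟩, hends⟩

lemma exists_spanning_tree [Fintype E] (hconn : G.Connected) :
    ∃ T : Set E, (∀ u v, G.reachIn T u v) ∧ G.Acyclic T := by
  have key : ∀ (n : ℕ) (T : Set E), T.ncard ≤ n → (∀ u v, G.reachIn T u v) →
      ∃ T' : Set E, T' ⊆ T ∧ (∀ u v, G.reachIn T' u v) ∧ G.Acyclic T' := by
    intro n
    induction n with
    | zero =>
        intro T hT hsp
        refine ⟨T, le_refl _, hsp, ?_⟩
        intro c hc
        have h0 : c.edge 0 ∈ T := hc (edge_zero_mem c)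
        have : 0 < T.ncard := (Set.ncard_pos (Set.toFinite T)).mpr ⟨_, h0⟩
        omega
    | succ n ih =>
        intro T hT hsp
        by_cases hac : G.Acyclic T
        · exact ⟨T, le_refl _, hsp, hac⟩
        · rw [Acyclic] at hac
          push_neg at hac
          obtain ⟨c, hc⟩ := hac
          have hss : T \ {c.edge 0} ⊂ T := by
            constructor
            · exact Set.diff_subset
            · intro hsub
              have := hsub (hc (edge_zero_mem c))
              simp at this
          have hcard : (T \ {c.edge 0}).ncard < T.ncard :=
            Set.ncard_lt_ncard hss (Set.toFinite T)
          obtain ⟨T', hT'sub, hT'⟩ := ih (T \ {c.edge 0}) (by omega)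
            (fun u v => reach_detour c hc (hsp u v))
          exact ⟨T', fun e he => (hT'sub he).1, hT'⟩
  obtain ⟨T, _, h⟩ := key (Set.univ : Set E).ncard Set.univ le_rfl hconn
  exact ⟨T, h⟩

lemma natCast_zmod_two (n : ℕ) : (n : ZMod 2) = if Odd n then 1 else 0 := by
  rcases Nat.even_or_odd n with h | h
  · rw [if_neg (by simpa [Nat.not_odd_iff_even] using h)]
    rw [ZMod.natCast_eq_zero_iff]
    obtain ⟨k, hk⟩ := h
    exact ⟨k, by omega⟩
  · rw [if_pos h]
    obtain ⟨k, hk⟩ := h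
    subst hk
    push_cast
    have h2 : (2 : ZMod 2) = 0 := rfl
    rw [h2]
    ring

lemma even_of_natCast_zmod_two {n : ℕ} (h : (n : ZMod 2) = 0) : Even n := by
  rw [ZMod.natCast_eq_zero_iff] at h
  exact Nat.even_iff.mpr (by omega)

lemma compEdges_congr {A : Set E} {u u' : V} (h : G.reachIn A u u') :
    G.compEdges A u = G.compEdges A u' := by
  ext x
  constructor
  · rintro ⟨hx, hr⟩
    exact ⟨hx, Relation.ReflTransGen.trans (reachIn_symm h) hr⟩
  · rintro ⟨hx, hr⟩
    exact ⟨hx, Relation.ReflTransGen.trans h hr⟩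

/-- From evenness of the number of odd components we get evenness of the number of
negative edges. -/
lemma even_negCount [Fintype E] {A : Set E}
    (heven : Even (G.oddCompCount A)) : Even (G.negEdgeCount A) := by
  classical
  set comp : E → Set E := fun e => G.compEdges A (G.fst e) with hcompdef
  have mem_comp_self : ∀ e ∈ A, e ∈ comp e := fun e he => ⟨he, Relation.ReflTransGen.refl⟩
  have comp_subset : ∀ e, comp e ⊆ A := fun e x hx => hx.1
  have comp_eq : ∀ e, ∀ e' ∈ comp e, comp e' = comp e := by
    intro e e' he'
    exact compEdges_congr (reachIn_symm he'.2)
  set F : Set E → Finset E := fun S => Finset.univ.filter (· ∈ S) with hFdef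
  have memF : ∀ (S : Set E) (e : E), e ∈ F S ↔ e ∈ S := by
    intro S e; simp [hFdef]
  have cardF : ∀ S : Set E, S.ncard = (F S).card := by
    intro S
    rw [show S = ↑(F S) by ext x; simp [hFdef]]
    rw [Set.ncard_coe_finset]
    congr 1
    ext x
    simp [hFdef]
  set C : Finset (Set E) := (F A).image comp with hCdef
  -- the union decomposition
  have hdisj : ∀ S ∈ C, ∀ S' ∈ C, S ≠ S' →
      Disjoint (F {e ∈ S | G.sign e = -1}) (F {e ∈ S' | G.sign e = -1}) := by
    intro S hS S' hS' hne
    rw [Finset.disjoint_left]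
    intro x hx hx'
    rw [memF] at hx hx'
    obtain ⟨a, haA, haS⟩ := Finset.mem_image.mp hS
    obtain ⟨a', haA', haS'⟩ := Finset.mem_image.mp hS'
    apply hne
    have h1 : comp x = S := by rw [← haS]; exact comp_eq a x (by rw [haS]; exact hx.1)
    have h2 : comp x = S' := by rw [← haS']; exact comp_eq a' x (by rw [haS']; exact hx'.1)
    rw [← h1, h2]
  have hcover : F {e ∈ A | G.sign e = -1}
      = C.biUnion (fun S => F {e ∈ S | G.sign e = -1}) := by
    ext x
    rw [memF]
    constructor
    · intro hx
      apply Finset.mem_biUnion.mpr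
      refine ⟨comp x, ?_, ?_⟩
      · exact Finset.mem_image.mpr ⟨x, (memF A x).mpr hx.1, rfl⟩
      · rw [memF]; exact ⟨mem_comp_self x hx.1, hx.2⟩
    · intro hx
      obtain ⟨S, hS, hxS⟩ := Finset.mem_biUnion.mp hx
      rw [memF] at hxS
      obtain ⟨a, haA, haS⟩ := Finset.mem_image.mp hS
      refine ⟨?_, hxS.2⟩
      exact comp_subset a (by rw [haS]; exact hxS.1)
  have hcardsum : G.negEdgeCount A = ∑ S ∈ C, G.negEdgeCount S := by
    unfold negEdgeCount
    rw [cardF, hcover, Finset.card_biUnion hdisj]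
    exact Finset.sum_congr rfl (fun S _ => (cardF _).symm)
  -- identify the odd components with the finset filter
  have hoddset : {S : Set E | (∃ v, S = G.compEdges A v) ∧ S.Nonempty ∧
      Odd (G.negEdgeCount S)} = ↑(C.filter (fun S => Odd (G.negEdgeCount S))) := by
    ext S
    simp only [Finset.coe_filter, Set.mem_setOf_eq, Finset.mem_coe]
    constructor
    · rintro ⟨⟨v, rfl⟩, ⟨e, heS⟩, hodd⟩
      refine ⟨Finset.mem_image.mpr ⟨e, (memF A e).mpr heS.1, ?_⟩, hodd⟩
      exact (compEdges_congr heS.2).symm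
    · rintro ⟨hS, hodd⟩
      obtain ⟨a, haA, haS⟩ := Finset.mem_image.mp hS
      rw [memF] at haA
      refine ⟨⟨G.fst a, haS.symm⟩, ⟨a, by rw [← haS]; exact mem_comp_self a haA⟩, hodd⟩
  have hoddcount : G.oddCompCount A = (C.filter (fun S => Odd (G.negEdgeCount S))).card := by
    unfold oddCompCount
    rw [hoddset, Set.ncard_coe_finset]
  -- parity computation in ZMod 2
  have hz : ((G.negEdgeCount A : ℕ) : ZMod 2) = 0 := by
    rw [hcardsum]
    push_cast
    rw [Finset.sum_congr rfl (fun S _ => natCast_zmod_two (G.negEdgeCount S))]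
    rw [Finset.sum_boole]
    rw [← hoddcount]  -- wrong direction, fix below
    rw [natCast_zmod_two]
    rw [if_neg (by simpa [Nat.not_odd_iff_even] using heven)]
  exact even_of_natCast_zmod_two hz

lemma boundary_eq_sum_s8 [Fintype E] (G : SignedGraph V E) (τ : E × Bool → ℤ) (f : E → ℤ)
    (v : V) :
    G.boundary τ f v = ∑ e : E,
      ((if G.fst e = v then τ (e, true) * f e else 0) +
       (if G.snd e = v then τ (e, false) * f e else 0)) := by
  unfold boundary
  rw [show {h : E × Bool | G.ep h = v}
      = ↑(Finset.univ.filter (fun h : E × Bool => G.ep h = v)) from by ext h; simp]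
  rw [finsum_mem_coe_finset, Finset.sum_filter, Fintype.sum_prod_type]
  apply Finset.sum_congr rfl
  intro e _
  rw [Fintype.sum_bool]
  simp [SignedGraph.ep]

end SignedGraph

/-- If a connected signed graph admits a `ℤ₂`-flow `f₁` whose support
has an even number of odd components, then it admits a 3-flow `f₂` with
`supp f₁ = E_{f₂ = ±1}` and `supp f₂ − supp f₁` acyclic. -/
theorem stmt_8 {V E : Type} [Fintype V] [Fintype E] (G : SignedGraph V E)
    (hconn : G.Connected) (τ₁ : E × Bool → ℤ) (f₁ : E → ℤ) (h₁ : G.IsZFlow 2 τ₁ f₁)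
    (heven : Even (G.oddCompCount (G.supp f₁))) :
    ∃ τ₂ f₂, G.IsFlow 3 τ₂ f₂ ∧ G.supp f₁ = {e | |f₂ e| = 1} ∧
      G.Acyclic (G.supp f₂ \ G.supp f₁) := by
  classical
  obtain ⟨hτ, hf1bound, hf1div⟩ := h₁
  have hτv : ∀ h, τ₁ h = 1 ∨ τ₁ h = -1 := hτ.1
  have hf1 : ∀ e, f₁ e = 0 ∨ f₁ e = 1 ∨ f₁ e = -1 := by
    intro e
    have h := abs_le.mp (by simpa using hf1bound e)
    omega
  set A : Set E := G.supp f₁ with hA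
  have hAmem : ∀ e, e ∈ A ↔ f₁ e ≠ 0 := fun e => Iff.rfl
  by_cases hAe : A = ∅
  · -- trivial case: empty support
    refine ⟨τ₁, fun _ => 0, ⟨hτ, by norm_num, ?_⟩, ?_, ?_⟩
    · intro v
      rw [SignedGraph.boundary_eq_sum_s8]
      simp
    · have : A = {e : E | |(0 : ℤ)| = 1} := by
        rw [hAe]; ext e; simp
      exact this
    · apply SignedGraph.acyclic_anti SignedGraph.acyclic_empty
      intro e he
      exact absurd rfl he.1
  · obtain ⟨T, hTsp, hTac⟩ := SignedGraph.exists_spanning_tree hconn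
    set J : Set E := T \ A with hJ
    have hAJ : ∀ e, e ∈ J → e ∉ A := fun e he => he.2
    have hJT : J ⊆ T := fun e he => he.1
    set P : E × Fin 2 → Prop := fun x => (x.1 ∈ A ∧ x.2 = 0) ∨ x.1 ∈ J with hP
    set MF : Finset (E × Fin 2) := Finset.univ.filter P with hMF
    set M : Multiset (E × Fin 2) := MF.val with hM
    set p : E × Fin 2 → V := fun x => G.fst x.1 with hp
    set q : E × Fin 2 → V := fun x => G.snd x.1 with hq
    set κ₁ : E × Fin 2 → ℤ := fun x => τ₁ (x.1, true) with hκ₁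
    set κ₂ : E × Fin 2 → ℤ := fun x => τ₁ (x.1, false) with hκ₂
    set σ' : E × Fin 2 → ℤ := fun x => G.sign x.1 with hσ'
    have hm : ∀ x : E × Fin 2, x ∈ M ↔ P x := by
      intro x
      rw [hM, hMF]
      constructor
      · intro hx
        exact (Finset.mem_filter.mp hx).2
      · intro hx
        exact Finset.mem_filter.mpr ⟨Finset.mem_univ x, hx⟩
    have hm0 : ∀ e : E, ((e, (0 : Fin 2)) ∈ M) ↔ (e ∈ A ∨ e ∈ J) := by
      intro e
      rw [hm]
      constructor
      · rintro (⟨h, _⟩ | h)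
        · exact Or.inl h
        · exact Or.inr h
      · rintro (h | h)
        · exact Or.inl ⟨h, rfl⟩
        · exact Or.inr h
    have hm1 : ∀ e : E, ((e, (1 : Fin 2)) ∈ M) ↔ e ∈ J := by
      intro e
      rw [hm]
      constructor
      · rintro (⟨_, h⟩ | h)
        · exact absurd h (by simp)
        · exact h
      · exact fun h => Or.inr h
    have hnd : M.Nodup := MF.nodup
    -- the degree of A at each vertex is even (from the Z₂-flow condition)
    have hdegA : ∀ v : V,
        (((Finset.univ.filter (fun e : E => e ∈ A ∧ G.fst e = v)).card : ZMod 2)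
          + ((Finset.univ.filter (fun e : E => e ∈ A ∧ G.snd e = v)).card : ZMod 2)) = 0 := by
      intro v
      have hdvd := hf1div v
      rw [SignedGraph.boundary_eq_sum_s8] at hdvd
      have hz : ((∑ e : E,
          ((if G.fst e = v then τ₁ (e, true) * f₁ e else 0) +
           (if G.snd e = v then τ₁ (e, false) * f₁ e else 0)) : ℤ) : ZMod 2) = 0 := by
        rw [ZMod.intCast_zmod_eq_zero_iff_dvd]
        exact_mod_cast hdvd
      rw [Int.cast_sum] at hz
      have castterm : ∀ (b : Bool) (e : E) (u : V),
          ((if u = v then τ₁ (e, b) * f₁ e else 0 : ℤ) : ZMod 2)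
            = if e ∈ A ∧ u = v then 1 else 0 := by
        intro b e u
        by_cases huv : u = v
        · by_cases heA : e ∈ A
          · rw [if_pos huv, if_pos ⟨heA, huv⟩]
            have hfe : f₁ e ≠ 0 := (hAmem e).mp heA
            rcases hτv (e, b) with h1 | h1 <;> rcases hf1 e with h0 | h0 | h0 <;>
              first
                | exact absurd h0 hfe
                | (rw [h1, h0]; decide)
          · rw [if_pos huv, if_neg (fun hh => heA hh.1)]
            have hfe : f₁ e = 0 := by
              by_contra hne
              exact heA ((hAmem e).mpr hne)
            rw [hfe, mul_zero]
            exact Int.cast_zero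
        · rw [if_neg huv, if_neg (fun hh => huv hh.2)]
          exact Int.cast_zero
      rw [Finset.sum_congr rfl (fun e _ => by
        rw [Int.cast_add, castterm true e (G.fst e), castterm false e (G.snd e)])] at hz
      rw [Finset.sum_add_distrib, Finset.sum_boole, Finset.sum_boole] at hz
      exact hz
    -- M has even degrees
    have hdegM : ∀ v : V, Even (TrailTheory.deg p q M v) := by
      intro v
      apply SignedGraph.even_of_natCast_zmod_two
      have hc1 : (M.filter (fun x => p x = v)).card
          = (Finset.univ.filter (fun x : E × Fin 2 => P x ∧ p x = v)).card := by
        rw [hM, ← Finset.filter_val, hMF, Finset.filter_filter]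
        rfl
      have hc2 : (M.filter (fun x => q x = v)).card
          = (Finset.univ.filter (fun x : E × Fin 2 => P x ∧ q x = v)).card := by
        rw [hM, ← Finset.filter_val, hMF, Finset.filter_filter]
        rfl
      have key : ∀ g : E → V,
          (((Finset.univ.filter (fun x : E × Fin 2 => P x ∧ g x.1 = v)).card : ZMod 2))
            = ((Finset.univ.filter (fun e : E => e ∈ A ∧ g e = v)).card : ZMod 2) := by
        intro g
        rw [Finset.natCast_card_filter, Finset.natCast_card_filter, Fintype.sum_prod_type]
        rw [Finset.sum_congr rfl (fun e (_ : e ∈ Finset.univ) => Fin.sum_univ_two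
          (fun i : Fin 2 => if P (e, i) ∧ g (e, i).1 = v then (1 : ZMod 2) else 0))]
        apply Finset.sum_congr rfl
        intro e _
        by_cases hgv : g e = v
        · by_cases heA : e ∈ A
          · have heJ : e ∉ J := fun hh => hAJ e hh heA
            rw [if_pos ⟨Or.inl ⟨heA, rfl⟩, hgv⟩,
              if_neg (by
                rintro ⟨(⟨_, hh⟩ | hh), _⟩
                · exact absurd hh (by simp)
                · exact heJ hh),
              if_pos ⟨heA, hgv⟩]
            ring
          · by_cases heJ : e ∈ J
            · rw [if_pos ⟨Or.inr heJ, hgv⟩, if_pos ⟨Or.inr heJ, hgv⟩,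
                if_neg (fun hh => heA hh.1)]
              decide
            · rw [if_neg, if_neg, if_neg (fun hh => heA hh.1)]
              · simp
              · rintro ⟨(⟨hh, _⟩ | hh), _⟩
                · exact heA hh
                · exact heJ hh
              · rintro ⟨(⟨hh, _⟩ | hh), _⟩
                · exact heA hh
                · exact heJ hh
        · have : ∀ (i : Fin 2), ¬ (P (e, i) ∧ g (e, i).1 = v) := by
            intro i hh
            exact hgv hh.2
          rw [if_neg (this 0), if_neg (this 1), if_neg (fun hh => hgv hh.2)]
          simp
      show ((TrailTheory.deg p q M v : ℕ) : ZMod 2) = 0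
      unfold TrailTheory.deg
      push_cast
      rw [hc1, hc2]
      push_cast
      rw [key (fun e => G.fst e), key (fun e => G.snd e)]
      exact hdegA v
    -- base vertex
    obtain ⟨e₀, he₀⟩ : ∃ e, e ∈ A := by
      by_contra hne
      push_neg at hne
      exact hAe (Set.eq_empty_iff_forall_notMem.mpr hne)
    set w : V := G.fst e₀ with hw
    -- reachability hypothesis for Hierholzer
    have hreach : ∀ x ∈ M,
        Relation.ReflTransGen (TrailTheory.step p q (M + 0)) w (p x) := by
      intro x _
      have hr := hTsp w (p x)
      apply Relation.ReflTransGen.mono ?_ _ _ hr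
      rintro a b ⟨e, heT, hends⟩
      have heM : (e, (0 : Fin 2)) ∈ M + 0 := by
        rw [add_zero, hm0]
        by_cases heA2 : e ∈ A
        · exact Or.inl heA2
        · exact Or.inr ⟨heT, heA2⟩
      exact ⟨(e, 0), heM, hends⟩
    have htrail : TrailTheory.Trail p q w w M := by
      have := TrailTheory.hierholzer (p := p) (q := q) M.card M 0 w le_rfl hdegM
        (TrailTheory.Trail.nil w) hreach
      rwa [zero_add] at this
    -- sign product over M is 1
    have hnegA : Even (G.negEdgeCount A) := SignedGraph.even_negCount heven
    have hprod : (M.map σ').prod = 1 := by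
      have h1 : (M.map σ').prod = ∏ x ∈ MF, σ' x := rfl
      rw [h1, hMF, Finset.prod_filter, Fintype.prod_prod_type]
      rw [Finset.prod_congr rfl (fun e (_ : e ∈ Finset.univ) => Fin.prod_univ_two
        (fun i : Fin 2 => if P (e, i) then σ' (e, i) else 1))]
      have step1 : ∀ e : E,
          (if P (e, (0 : Fin 2)) then σ' (e, 0) else 1)
            * (if P (e, (1 : Fin 2)) then σ' (e, 1) else 1)
          = if e ∈ A then G.sign e else 1 := by
        intro e
        by_cases heA : e ∈ A
        · have heJ : e ∉ J := fun hh => hAJ e hh heA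
          rw [if_pos (Or.inl ⟨heA, rfl⟩), if_neg (by
            rintro (⟨_, hh⟩ | hh)
            · exact absurd hh (by simp)
            · exact heJ hh), if_pos heA]
          simp only [hσ']
          ring
        · by_cases heJ : e ∈ J
          · rw [if_pos (Or.inr heJ), if_pos (Or.inr heJ), if_neg heA]
            simp only [hσ']
            rcases G.sign_unit e with h | h <;> rw [h] <;> norm_num
          · rw [if_neg, if_neg, if_neg heA]
            · ring
            · rintro (⟨hh, _⟩ | hh)
              · exact heA hh
              · exact heJ hh
            · rintro (⟨hh, _⟩ | hh)
              · exact heA hh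
              · exact heJ hh
      rw [Finset.prod_congr rfl (fun e _ => step1 e)]
      rw [← Finset.prod_filter]
      have hsplit := Finset.prod_filter_mul_prod_filter_not
        (Finset.univ.filter (fun e : E => e ∈ A)) (fun e => G.sign e = -1) (fun e => G.sign e)
      rw [← hsplit]
      have hneg1 : ∏ e ∈ (Finset.univ.filter (fun e : E => e ∈ A)).filter
          (fun e => G.sign e = -1), G.sign e = (-1 : ℤ) ^ (G.negEdgeCount A) := by
        rw [Finset.prod_congr rfl (fun e he => (Finset.mem_filter.mp he).2)]
        rw [Finset.prod_const]
        congr 1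
        rw [Finset.filter_filter]
        unfold SignedGraph.negEdgeCount
        rw [show {e : E | e ∈ A ∧ G.sign e = -1}
            = ↑(Finset.univ.filter (fun e : E => e ∈ A ∧ G.sign e = -1)) from by ext x; simp]
        rw [Set.ncard_coe_finset]
      have hpos1 : ∏ e ∈ (Finset.univ.filter (fun e : E => e ∈ A)).filter
          (fun e => ¬ G.sign e = -1), G.sign e = 1 := by
        apply Finset.prod_eq_one
        intro e he
        rcases G.sign_unit e with h | h
        · exact h
        · exact absurd h (Finset.mem_filter.mp he).2
      rw [hneg1, hpos1, hnegA.neg_one_pow, one_mul]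
    -- the flow on M
    obtain ⟨f, hf0, hfpm, hfB⟩ := TrailTheory.closed_trail_flow κ₁ κ₂ σ'
      (fun x => hτv _) (fun x => hτv _) (fun x => hτ.2 x.1) htrail hnd hprod
    set f₂ : E → ℤ := fun e => f (e, 0) + f (e, 1) with hf₂
    have hvalA : ∀ e ∈ A, f₂ e = 1 ∨ f₂ e = -1 := by
      intro e he
      have h0 : f (e, 0) = 1 ∨ f (e, 0) = -1 := hfpm _ ((hm0 e).mpr (Or.inl he))
      have h1 : f (e, 1) = 0 := hf0 _ (fun hh => hAJ e ((hm1 e).mp hh) he)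
      simp only [hf₂]
      rcases h0 with h | h <;> rw [h, h1] <;> norm_num
    have hvalJ : ∀ e ∈ J, f₂ e = 0 ∨ f₂ e = 2 ∨ f₂ e = -2 := by
      intro e he
      have h0 : f (e, 0) = 1 ∨ f (e, 0) = -1 := hfpm _ ((hm0 e).mpr (Or.inr he))
      have h1 : f (e, 1) = 1 ∨ f (e, 1) = -1 := hfpm _ ((hm1 e).mpr he)
      simp only [hf₂]
      rcases h0 with h | h <;> rcases h1 with h' | h' <;> rw [h, h'] <;> norm_num
    have hval0 : ∀ e, e ∉ A → e ∉ J → f₂ e = 0 := by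
      intro e heA heJ
      have h0 : f (e, 0) = 0 := hf0 _ (fun hh => by
        rcases (hm0 e).mp hh with h | h
        · exact heA h
        · exact heJ h)
      have h1 : f (e, 1) = 0 := hf0 _ (fun hh => heJ ((hm1 e).mp hh))
      simp only [hf₂]
      rw [h0, h1, add_zero]
    refine ⟨τ₁, f₂, ⟨hτ, ?_, ?_⟩, ?_, ?_⟩
    · -- bound
      intro e
      by_cases heA : e ∈ A
      · rcases hvalA e heA with h | h <;> rw [h] <;> norm_num
      · by_cases heJ : e ∈ J
        · rcases hvalJ e heJ with h | h | h <;> rw [h] <;> norm_num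
        · rw [hval0 e heA heJ]
          norm_num
    · -- boundary zero
      intro v
      rw [SignedGraph.boundary_eq_sum_s8]
      have hBd := hfB v
      unfold TrailTheory.Bd at hBd
      rw [Fintype.sum_prod_type] at hBd
      rw [Finset.sum_congr rfl (fun e (_ : e ∈ Finset.univ) => Fin.sum_univ_two
        (fun i : Fin 2 => (if p (e, i) = v then κ₁ (e, i) * f (e, i) else 0)
          + (if q (e, i) = v then κ₂ (e, i) * f (e, i) else 0)))] at hBd
      refine Eq.trans (Finset.sum_congr rfl ?_) hBd
      intro e _
      simp only [hp, hq, hκ₁, hκ₂, hf₂]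
      split_ifs <;> ring
    · -- support characterization
      ext e
      constructor
      · intro he
        rcases hvalA e he with h | h <;> rw [Set.mem_setOf_eq, h] <;> norm_num
      · intro he
        rw [Set.mem_setOf_eq] at he
        by_contra heA
        by_cases heJ : e ∈ J
        · rcases hvalJ e heJ with h | h | h <;> rw [h] at he <;> norm_num at he
        · rw [hval0 e heA heJ] at he
          norm_num at he
    · -- acyclicity
      apply SignedGraph.acyclic_anti hTac
      rintro e ⟨he2, hne1⟩
      have heA : e ∉ A := hne1
      have heJ : e ∈ J := by
        by_contra heJ
        exact he2 (hval0 e heA heJ)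
      exact hJT heJ
end
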